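/- arXiv:1709.07737 — 2 statements merged into one kernel-verified Lean document; each statement's English description precedes it below -/
import Mathlib

section
/- (Proposition 7.3.) Let p > 0 and let g : (0,∞) → ℝ be continuous, nonnegative and decreasing. Fix y > 0, t < T, and x with e^{(T−t)/p} y < x < e^{(T−t)/p}(y + p) − p, and define τ_{x,t} by e^{τ_{x,t}/p} = e^{T/p}(1 + y/p) − (x/p) e^{t/p}. Then t < τ_{x,t} < T, and the supremum, over all measurable controls v : [t,T] → (0,1] for which the solution x(·) of dx(s)/ds = −x(s)/p − v(s) with x(T) = y satisfies x(t) = x, of ∫_t^T g(x(s)/v(s)) e^{−(T−s)/p} v(s) ds equals ∫_{τ_{x,t}}^T g(x_p(s)) e^{−(T−s)/p} ds, where x_p(s) = e^{(T−s)/p}(y + p) − p. -/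
set_option maxHeartbeats 1000000


open MeasureTheory Real Filter Set

/-- The trajectory associated with a control v :
x(s) = e^{(T−s)/p} y + ∫_s^T e^{(s'−s)/p} v(s') ds'. -/
noncomputable def traj (p y T : ℝ) (v : ℝ → ℝ) (s : ℝ) : ℝ :=
  Real.exp ((T - s) / p) * y + ∫ s' in s..T, Real.exp ((s' - s) / p) * v s'

/-- The free trajectory x_p(s) = e^{(T−s)/p}(y+p) − p, corresponding to v ≡ 1. -/
noncomputable def xpTraj (p y T s : ℝ) : ℝ := Real.exp ((T - s) / p) * (y + p) - p


noncomputable def gext (g : ℝ → ℝ) : ℝ → ℝ :=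
  Function.extend (Subtype.val : Set.Ioi (0:ℝ) → ℝ) (fun z => g z.val) fun _ => 0

lemma gext_eq (g : ℝ → ℝ) {z : ℝ} (hz : 0 < z) : gext g z = g z := by
  have : z = (Subtype.val (⟨z, hz⟩ : Set.Ioi (0:ℝ))) := rfl
  rw [gext, this, Subtype.val_injective.extend_apply]

lemma gext_measurable (g : ℝ → ℝ) (hg : ContinuousOn g (Set.Ioi 0)) :
    Measurable (gext g) := by
  apply (MeasurableEmbedding.subtype_coe measurableSet_Ioi).measurable_extend
  · exact (continuousOn_iff_continuous_restrict.1 hg).measurable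
  · exact measurable_const

lemma exp_int {p : ℝ} (hp : 0 < p) (k a c : ℝ) :
    ∫ s in a..c, Real.exp ((s - k)/p) = p * Real.exp ((c - k)/p) - p * Real.exp ((a - k)/p) := by
  have h : ∀ s : ℝ, HasDerivAt (fun u : ℝ => p * Real.exp ((u - k)/p)) (Real.exp ((s - k)/p)) s := by
    intro s
    have h1 : HasDerivAt (fun u : ℝ => (u - k)/p) (1/p) s :=
      ((hasDerivAt_id s).sub_const k).div_const p
    have h2 := (Real.hasDerivAt_exp ((s - k)/p)).comp s h1
    have h3 := h2.const_mul p
    convert h3 using 1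
    · rfl
    · rfl
    · rfl
    · field_simp
  have hint : IntervalIntegrable (fun s => Real.exp ((s - k)/p)) volume a c :=
    (Real.continuous_exp.comp (by continuity)).intervalIntegrable a c
  rw [intervalIntegral.integral_eq_sub_of_hasDerivAt (fun s _ => h s) hint]

noncomputable def wfun (p T : ℝ) (v : ℝ → ℝ) (s : ℝ) : ℝ := Real.exp ((s - T)/p) * v s

noncomputable def ufun (p y T : ℝ) (v : ℝ → ℝ) (s : ℝ) : ℝ := y + ∫ s' in s..T, wfun p T v s'

noncomputable def hfun (g : ℝ → ℝ) (p y r : ℝ) : ℝ := g (p * r / (p + y - r))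

section basic

variable {p y t T : ℝ} {v : ℝ → ℝ}

lemma wfun_intOn (hp : 0 < p) (hv : Measurable v)
    (hv01 : ∀ s ∈ Set.Icc t T, 0 < v s ∧ v s ≤ 1) :
    IntegrableOn (wfun p T v) (Set.Icc t T) volume := by
  apply Integrable.mono' (integrable_const (1:ℝ))
  · exact ((Real.measurable_exp.comp (by fun_prop)).mul hv).aestronglyMeasurable
  · rw [ae_restrict_iff' measurableSet_Icc]
    filter_upwards with s hs
    have h1 := (hv01 s hs).1
    have h2 := (hv01 s hs).2
    have h3 : Real.exp ((s - T)/p) ≤ 1 := by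
      rw [← Real.exp_zero]
      apply Real.exp_le_exp.2
      apply div_nonpos_of_nonpos_of_nonneg (by linarith [hs.2]) hp.le
    rw [Real.norm_eq_abs, wfun, abs_of_nonneg (by positivity)]
    nlinarith [Real.exp_pos ((s - T)/p)]

lemma wfun_ii (hp : 0 < p) (hv : Measurable v)
    (hv01 : ∀ s ∈ Set.Icc t T, 0 < v s ∧ v s ≤ 1) {a c : ℝ}
    (ha : a ∈ Set.Icc t T) (hc : c ∈ Set.Icc t T) :
    IntervalIntegrable (wfun p T v) volume a c := by
  apply IntegrableOn.intervalIntegrable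
  apply (wfun_intOn hp hv hv01).mono_set
  rw [Set.uIcc_eq_union]
  exact Set.union_subset (Set.Icc_subset_Icc ha.1 hc.2) (Set.Icc_subset_Icc hc.1 ha.2)

lemma traj_eq_ufun (hp : 0 < p) (hv : Measurable v)
    (hv01 : ∀ s ∈ Set.Icc t T, 0 < v s ∧ v s ≤ 1) {s : ℝ} (hs : s ∈ Set.Icc t T) :
    traj p y T v s = Real.exp ((T - s)/p) * ufun p y T v s := by
  rw [traj, ufun, mul_add]
  congr 1
  have : ∀ s' : ℝ, Real.exp ((s' - s)/p) * v s' =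
      Real.exp ((T - s)/p) * (Real.exp ((s' - T)/p) * v s') := by
    intro s'
    rw [← mul_assoc, ← Real.exp_add]
    congr 2
    field_simp
    ring
  simp_rw [this]
  rw [intervalIntegral.integral_const_mul]
  rfl

lemma ufun_T : ufun p y T v T = y := by simp [ufun]

lemma ufun_sub (hp : 0 < p) (hv : Measurable v)
    (hv01 : ∀ s ∈ Set.Icc t T, 0 < v s ∧ v s ≤ 1) {s1 s2 : ℝ}
    (hs1 : s1 ∈ Set.Icc t T) (hs2 : s2 ∈ Set.Icc t T) :
    ufun p y T v s1 - ufun p y T v s2 = ∫ s in s1..s2, wfun p T v s := by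
  rw [ufun, ufun]
  have := intervalIntegral.integral_add_adjacent_intervals
    (wfun_ii hp hv hv01 hs1 hs2) (wfun_ii hp hv hv01 hs2 (Set.right_mem_Icc.2 (hs1.1.trans hs1.2)))
  ring_nf
  linarith [this]

end basic

section more

variable {p y t T : ℝ} {v : ℝ → ℝ} {g : ℝ → ℝ}

lemma ufun_anti (hp : 0 < p) (hv : Measurable v)
    (hv01 : ∀ s ∈ Set.Icc t T, 0 < v s ∧ v s ≤ 1) {s1 s2 : ℝ}
    (hs1 : s1 ∈ Set.Icc t T) (hs2 : s2 ∈ Set.Icc t T) (h12 : s1 ≤ s2) :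
    ufun p y T v s2 ≤ ufun p y T v s1 := by
  have h := ufun_sub (y := y) hp hv hv01 hs1 hs2
  have hnn : 0 ≤ ∫ s in s1..s2, wfun p T v s := by
    apply intervalIntegral.integral_nonneg h12
    intro s hs
    have hs' : s ∈ Set.Icc t T := ⟨hs1.1.trans hs.1, hs.2.trans hs2.2⟩
    have := (hv01 s hs').1
    have := Real.exp_pos ((s - T)/p)
    rw [wfun]; positivity
  linarith

lemma ufun_ge (hp : 0 < p) (hv : Measurable v)
    (hv01 : ∀ s ∈ Set.Icc t T, 0 < v s ∧ v s ≤ 1) {s : ℝ} (hs : s ∈ Set.Icc t T) :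
    y ≤ ufun p y T v s := by
  have := ufun_anti (y := y) hp hv hv01 hs (Set.right_mem_Icc.2 (hs.1.trans hs.2)) hs.2
  rw [ufun_T] at this; exact this

lemma ufun_le (hp : 0 < p) (hv : Measurable v)
    (hv01 : ∀ s ∈ Set.Icc t T, 0 < v s ∧ v s ≤ 1) {s : ℝ} (hs : s ∈ Set.Icc t T) :
    ufun p y T v s ≤ y + p - p * Real.exp ((s - T)/p) := by
  rw [ufun]
  have hTT : T ∈ Set.Icc t T := Set.right_mem_Icc.2 (hs.1.trans hs.2)
  have hmono : (∫ s' in s..T, wfun p T v s') ≤ ∫ s' in s..T, Real.exp ((s' - T)/p) := by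
    apply intervalIntegral.integral_mono_on hs.2 (wfun_ii hp hv hv01 hs hTT)
      ((by fun_prop : Continuous fun s' : ℝ => Real.exp ((s' - T)/p)).intervalIntegrable s T)
    intro u hu
    have hu' : u ∈ Set.Icc t T := ⟨hs.1.trans hu.1, hu.2⟩
    have h1 := (hv01 u hu').1
    have h2 := (hv01 u hu').2
    have := Real.exp_pos ((u - T)/p)
    rw [wfun]
    nlinarith
  rw [exp_int hp T s T] at hmono
  simp at hmono
  linarith

lemma ufun_contOn (hp : 0 < p) (hv : Measurable v)
    (hv01 : ∀ s ∈ Set.Icc t T, 0 < v s ∧ v s ≤ 1) (htT : t ≤ T) :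
    ContinuousOn (ufun p y T v) (Set.Icc t T) := by
  apply continuousOn_const.add
  have h := intervalIntegral.continuousOn_primitive_interval_left
    (f := wfun p T v) (μ := volume) (a := t) (b := T)
    (by rw [Set.uIcc_of_le htT]; exact wfun_intOn hp hv hv01)
  rw [Set.uIcc_of_le htT] at h
  exact h

lemma hfun_anti (hp : 0 < p) (hy : 0 < y)
    (hgdec : AntitoneOn g (Set.Ioi 0)) {r1 r2 : ℝ}
    (h1 : 0 < r1) (h12 : r1 ≤ r2) (h2 : r2 < p + y) :
    hfun g p y r2 ≤ hfun g p y r1 := by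
  have d1 : 0 < p + y - r1 := by linarith
  have d2 : 0 < p + y - r2 := by linarith
  have a1 : 0 < p * r1 / (p + y - r1) := div_pos (by positivity) d1
  have a2 : 0 < p * r2 / (p + y - r2) := div_pos (by nlinarith) d2
  apply hgdec a1 a2
  rw [div_le_div_iff₀ d1 d2]
  nlinarith [mul_nonneg (mul_nonneg hp.le (show (0:ℝ) ≤ p + y by linarith)) (sub_nonneg.2 h12)]

lemma hfun_contOn (hp : 0 < p) (hy : 0 < y)
    (hgcont : ContinuousOn g (Set.Ioi 0)) {c : ℝ} (hc : c < p + y) :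
    ContinuousOn (hfun g p y) (Set.Icc y c) := by
  apply hgcont.comp
  · apply ContinuousOn.div (by fun_prop) (by fun_prop)
    intro r hr
    have : 0 < p + y - r := by linarith [hr.2]
    linarith
  · intro r hr
    have h1 : 0 < p + y - r := by linarith [hr.2]
    have h2 : 0 < r := lt_of_lt_of_le hy hr.1
    exact Set.mem_Ioi.2 (by positivity)

end more

section obj

variable {p y t T : ℝ} {v : ℝ → ℝ} {g : ℝ → ℝ}

lemma traj_contOn (hp : 0 < p) (hy : 0 < y) (hv : Measurable v)
    (hv01 : ∀ s ∈ Set.Icc t T, 0 < v s ∧ v s ≤ 1) (htT : t ≤ T) :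
    ContinuousOn (traj p y T v) (Set.Icc t T) := by
  exact ContinuousOn.congr
    ((by fun_prop : Continuous fun s : ℝ => Real.exp ((T - s)/p)).continuousOn.mul
      (ufun_contOn (y := y) hp hv hv01 htT))
    (fun s hs => traj_eq_ufun hp hv hv01 hs)

lemma traj_ge (hp : 0 < p) (hy : 0 < y) (hv : Measurable v)
    (hv01 : ∀ s ∈ Set.Icc t T, 0 < v s ∧ v s ≤ 1) {s : ℝ} (hs : s ∈ Set.Icc t T) :
    y ≤ traj p y T v s := by
  rw [traj_eq_ufun hp hv hv01 hs]
  have h1 : 1 ≤ Real.exp ((T - s)/p) := by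
    rw [← Real.exp_zero]
    exact Real.exp_le_exp.2 (div_nonneg (by linarith [hs.2]) hp.le)
  have h2 := ufun_ge (y := y) hp hv hv01 hs
  nlinarith

lemma div_v_ge (hp : 0 < p) (hy : 0 < y) (hv : Measurable v)
    (hv01 : ∀ s ∈ Set.Icc t T, 0 < v s ∧ v s ≤ 1) {s : ℝ} (hs : s ∈ Set.Icc t T) :
    y ≤ traj p y T v s / v s := by
  have h1 := traj_ge hp hy hv hv01 hs
  have h2 := (hv01 s hs).1
  have h3 := (hv01 s hs).2
  rw [le_div_iff₀ h2]
  nlinarith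

end obj

section obj2

variable {p y t T : ℝ} {v : ℝ → ℝ} {g : ℝ → ℝ}

lemma obj_nonneg (hp : 0 < p) (hy : 0 < y) (hv : Measurable v)
    (hv01 : ∀ s ∈ Set.Icc t T, 0 < v s ∧ v s ≤ 1)
    (hgnonneg : ∀ z > (0:ℝ), 0 ≤ g z) {s : ℝ} (hs : s ∈ Set.Icc t T) :
    0 ≤ g (traj p y T v s / v s) * Real.exp (-(T - s) / p) * v s := by
  have h1 := div_v_ge hp hy hv hv01 hs
  have h2 := (hv01 s hs).1
  have h3 := hgnonneg _ (lt_of_lt_of_le hy h1)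
  have h4 := Real.exp_pos (-(T - s)/p)
  positivity

lemma obj_le_bound (hp : 0 < p) (hy : 0 < y) (hv : Measurable v)
    (hv01 : ∀ s ∈ Set.Icc t T, 0 < v s ∧ v s ≤ 1)
    (hgnonneg : ∀ z > (0:ℝ), 0 ≤ g z) (hgdec : AntitoneOn g (Set.Ioi 0))
    {s : ℝ} (hs : s ∈ Set.Icc t T) :
    g (traj p y T v s / v s) * Real.exp (-(T - s) / p) * v s ≤ g y := by
  have h1 := div_v_ge hp hy hv hv01 hs
  have h2 := (hv01 s hs).1
  have h3 := (hv01 s hs).2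
  have h4 : g (traj p y T v s / v s) ≤ g y :=
    hgdec (Set.mem_Ioi.2 hy) (Set.mem_Ioi.2 (lt_of_lt_of_le hy h1)) h1
  have h5 := hgnonneg _ (lt_of_lt_of_le hy h1)
  have h6 : Real.exp (-(T - s)/p) ≤ 1 := by
    calc Real.exp (-(T - s)/p) ≤ Real.exp 0 := Real.exp_le_exp.2
          (div_nonpos_of_nonpos_of_nonneg (by linarith [hs.2]) hp.le)
      _ = 1 := Real.exp_zero
  have h7 := Real.exp_pos (-(T - s)/p)
  calc g (traj p y T v s / v s) * Real.exp (-(T - s) / p) * v s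
      = g (traj p y T v s / v s) * (Real.exp (-(T - s) / p) * v s) := by ring
    _ ≤ g y * 1 := mul_le_mul h4 (by nlinarith) (by positivity) (hgnonneg y hy)
    _ = g y := mul_one _

lemma obj_intOn (hp : 0 < p) (hy : 0 < y) (htT : t ≤ T) (hv : Measurable v)
    (hv01 : ∀ s ∈ Set.Icc t T, 0 < v s ∧ v s ≤ 1)
    (hgcont : ContinuousOn g (Set.Ioi 0))
    (hgnonneg : ∀ z > (0:ℝ), 0 ≤ g z) (hgdec : AntitoneOn g (Set.Ioi 0)) :
    IntegrableOn (fun s => g (traj p y T v s / v s) * Real.exp (-(T - s) / p) * v s)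
      (Set.Icc t T) volume := by
  have hEq : Set.EqOn (fun s => g (traj p y T v s / v s) * Real.exp (-(T - s) / p) * v s)
      (fun s => gext g (traj p y T v s / v s) * Real.exp (-(T - s) / p) * v s)
      (Set.Icc t T) := by
    intro s hs
    have h1 := div_v_ge hp hy hv hv01 hs
    simp only [gext_eq g (lt_of_lt_of_le hy h1)]
  apply IntegrableOn.congr_fun _ hEq.symm measurableSet_Icc
  have hmeas : AEStronglyMeasurable
      (fun s => gext g (traj p y T v s / v s) * Real.exp (-(T - s) / p) * v s)
      (volume.restrict (Set.Icc t T)) := by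
    apply AEStronglyMeasurable.mul
    apply AEStronglyMeasurable.mul
    · apply AEMeasurable.aestronglyMeasurable
      apply (gext_measurable g hgcont).comp_aemeasurable
      exact (((traj_contOn hp hy hv hv01 htT).aemeasurable measurableSet_Icc)).div
        hv.aemeasurable.restrict
    · exact (Continuous.aestronglyMeasurable (by fun_prop))
    · exact hv.aestronglyMeasurable.restrict
  apply Integrable.mono' (integrable_const (g y)) hmeas
  rw [ae_restrict_iff' measurableSet_Icc]
  filter_upwards with s hs
  have h1 := div_v_ge hp hy hv hv01 hs
  simp only [Real.norm_eq_abs, gext_eq g (lt_of_lt_of_le hy h1)]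
  rw [abs_of_nonneg (obj_nonneg hp hy hv hv01 hgnonneg hs)]
  exact obj_le_bound hp hy hv hv01 hgnonneg hgdec hs

lemma stepA (hp : 0 < p) (hy : 0 < y) (hv : Measurable v)
    (hv01 : ∀ s ∈ Set.Icc t T, 0 < v s ∧ v s ≤ 1)
    (hgdec : AntitoneOn g (Set.Ioi 0)) {s : ℝ} (hs : s ∈ Set.Icc t T) :
    g (traj p y T v s / v s) * Real.exp (-(T - s) / p) * v s
      ≤ hfun g p y (ufun p y T v s) * wfun p T v s := by
  have hvpos := (hv01 s hs).1
  have hvle := (hv01 s hs).2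
  have hbpos := Real.exp_pos ((s - T)/p)
  have hu_ge : y ≤ ufun p y T v s := ufun_ge hp hv hv01 hs
  have hu_le : ufun p y T v s ≤ y + p - p * Real.exp ((s - T)/p) := ufun_le hp hv hv01 hs
  have hupos : 0 < ufun p y T v s := lt_of_lt_of_le hy hu_ge
  have hwpos : 0 < wfun p T v s := by rw [wfun]; positivity
  have hd : 0 < p + y - ufun p y T v s := by nlinarith
  have hbe : Real.exp (-(T - s)/p) = Real.exp ((s - T)/p) := by congr 1; ring
  have hdiv : traj p y T v s / v s = ufun p y T v s / wfun p T v s := by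
    rw [traj_eq_ufun hp hv hv01 hs, wfun]
    rw [div_eq_div_iff (by positivity) (by positivity)]
    have e1 : Real.exp ((T - s)/p) * Real.exp ((s - T)/p) = 1 := by
      rw [← Real.exp_add]
      rw [show (T - s)/p + (s - T)/p = 0 by ring, Real.exp_zero]
    linear_combination ufun p y T v s * v s * e1
  have hkey : p * ufun p y T v s / (p + y - ufun p y T v s) ≤ ufun p y T v s / wfun p T v s := by
    rw [div_le_div_iff₀ hd hwpos]
    have hwb : wfun p T v s ≤ Real.exp ((s - T)/p) := by
      rw [wfun]; nlinarith
    nlinarith [mul_le_mul_of_nonneg_left hwb (le_of_lt hupos)]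
  have hineq : g (ufun p y T v s / wfun p T v s)
      ≤ g (p * ufun p y T v s / (p + y - ufun p y T v s)) := by
    apply hgdec _ _ hkey
    · exact Set.mem_Ioi.2 (div_pos (by positivity) hd)
    · exact Set.mem_Ioi.2 (div_pos hupos hwpos)
  rw [hdiv, hbe, mul_assoc]
  calc g (ufun p y T v s / wfun p T v s) * (Real.exp ((s - T)/p) * v s)
      = g (ufun p y T v s / wfun p T v s) * wfun p T v s := by rw [wfun]
    _ ≤ g (p * ufun p y T v s / (p + y - ufun p y T v s)) * wfun p T v s :=
        mul_le_mul_of_nonneg_right hineq hwpos.le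
    _ = hfun g p y (ufun p y T v s) * wfun p T v s := by rw [hfun]

end obj2

lemma intOn_to_ii {f : ℝ → ℝ} {a b : ℝ} (h : IntegrableOn f (Set.Icc a b) volume)
    (hab : a ≤ b) : IntervalIntegrable f volume a b :=
  IntegrableOn.intervalIntegrable (by rwa [Set.uIcc_of_le hab])

section upper

variable {p y t T x : ℝ} {v : ℝ → ℝ} {g : ℝ → ℝ}

lemma hfun_y (hp : 0 < p) (hy : 0 < y) : hfun g p y y = g y := by
  rw [hfun]
  congr 1
  field_simp
  simp [hp.ne']

lemma upper (hp : 0 < p) (hy : 0 < y) (htT : t < T)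
    (hgcont : ContinuousOn g (Set.Ioi 0))
    (hgnonneg : ∀ z > (0:ℝ), 0 ≤ g z)
    (hgdec : AntitoneOn g (Set.Ioi 0))
    (hx1 : Real.exp ((T - t) / p) * y < x)
    (hx2 : x < Real.exp ((T - t) / p) * (y + p) - p)
    (hv : Measurable v)
    (hv01 : ∀ s ∈ Set.Icc t T, 0 < v s ∧ v s ≤ 1)
    (hvt : traj p y T v t = x) :
    (∫ s in t..T, g (traj p y T v s / v s) * Real.exp (-(T - s) / p) * v s)
      ≤ ∫ r in y..(Real.exp ((t - T) / p) * x), hfun g p y r := by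
  set U : ℝ := Real.exp ((t - T)/p) * x with hU_def
  set uf : ℝ → ℝ := ufun p y T v with huf_def
  set hf : ℝ → ℝ := hfun g p y with hhf_def
  have htT' : t ≤ T := htT.le
  have htmem : t ∈ Set.Icc t T := Set.left_mem_Icc.2 htT'
  have hTmem : T ∈ Set.Icc t T := Set.right_mem_Icc.2 htT'
  have hBpos : 0 < Real.exp ((t - T)/p) := Real.exp_pos _
  have hee : Real.exp ((T - t)/p) * Real.exp ((t - T)/p) = 1 := by
    rw [← Real.exp_add, show (T - t)/p + (t - T)/p = 0 by ring, Real.exp_zero]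
  -- ufun t = U
  have hut : uf t = U := by
    have h := traj_eq_ufun (y := y) hp hv hv01 htmem
    rw [hvt] at h
    rw [hU_def, h]
    rw [← mul_assoc, mul_comm (Real.exp ((t - T)/p)), hee, one_mul]
  -- y < U and U < p + y
  have hyU : y < U := by
    rw [hU_def]
    calc y = (Real.exp ((T - t)/p) * y) * Real.exp ((t - T)/p) := by
          rw [mul_comm (Real.exp ((T - t)/p)) y, mul_assoc, hee, mul_one]
      _ < Real.exp ((t - T)/p) * x := by
          rw [mul_comm]
          exact mul_lt_mul_of_pos_left hx1 hBpos
  have hUlt : U < y + p - p * Real.exp ((t - T)/p) := by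
    rw [hU_def]
    have := mul_lt_mul_of_pos_left hx2 hBpos
    calc Real.exp ((t - T)/p) * x
        < Real.exp ((t - T)/p) * (Real.exp ((T - t)/p) * (y + p) - p) := this
      _ = y + p - p * Real.exp ((t - T)/p) := by
          rw [mul_sub, ← mul_assoc, mul_comm (Real.exp ((t - T)/p)), hee]
          ring
  have hUpy : U < p + y := by
    have : 0 < p * Real.exp ((t - T)/p) := by positivity
    linarith
  -- values of uf lie in [y, U]
  have huf_mem : ∀ s ∈ Set.Icc t T, uf s ∈ Set.Icc y U := by
    intro s hs
    refine ⟨ufun_ge hp hv hv01 hs, ?_⟩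
    rw [← hut]
    exact ufun_anti hp hv hv01 htmem hs hs.1
  have hf_contOn : ContinuousOn hf (Set.Icc y U) := hfun_contOn hp hy hgcont hUpy
  have hfu_contOn : ContinuousOn (fun s => hf (uf s)) (Set.Icc t T) :=
    hf_contOn.comp (ufun_contOn hp hv hv01 htT') huf_mem
  -- nonneg and upper bounds for hf on [y,U]
  have hf_nonneg : ∀ r ∈ Set.Icc y U, 0 ≤ hf r := by
    intro r hr
    have hd : 0 < p + y - r := by linarith [hr.2]
    have h0 : 0 < r := lt_of_lt_of_le hy hr.1
    exact hgnonneg _ (div_pos (by positivity) hd)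
  have hf_le : ∀ r ∈ Set.Icc y U, hf r ≤ g y := by
    intro r hr
    have h0 : 0 < r := lt_of_lt_of_le hy hr.1
    have := hfun_anti (g := g) hp hy hgdec hy hr.1 (by linarith [hr.2])
    rwa [hfun_y hp hy] at this
  -- integrability of s ↦ hf (uf s) * wfun s on Icc t T
  have hint_hu : IntegrableOn (fun s => hf (uf s) * wfun p T v s) (Set.Icc t T) volume := by
    apply Integrable.mono' (integrable_const (g y))
    · exact ((hfu_contOn.aemeasurable measurableSet_Icc).mul
        ((Real.measurable_exp.comp (by fun_prop)).mul hv).aemeasurable.restrict).aestronglyMeasurable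
    · rw [ae_restrict_iff' measurableSet_Icc]
      filter_upwards with s hs
      have h1 := hf_nonneg _ (huf_mem s hs)
      have h2 := hf_le _ (huf_mem s hs)
      have h3 := (hv01 s hs).1
      have h4 := (hv01 s hs).2
      have h5 : Real.exp ((s - T)/p) ≤ 1 := by
        calc Real.exp ((s - T)/p) ≤ Real.exp 0 :=
              Real.exp_le_exp.2 (div_nonpos_of_nonpos_of_nonneg (by linarith [hs.2]) hp.le)
          _ = 1 := Real.exp_zero
      have h6 : 0 < Real.exp ((s - T)/p) := Real.exp_pos _
      have hw1 : 0 < wfun p T v s := by rw [wfun]; positivity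
      have hw2 : wfun p T v s ≤ 1 := by rw [wfun]; nlinarith
      rw [Real.norm_eq_abs, abs_of_nonneg (by positivity)]
      nlinarith
  -- step A : compare integrals
  have hA : (∫ s in t..T, g (traj p y T v s / v s) * Real.exp (-(T - s) / p) * v s)
      ≤ ∫ s in t..T, hf (uf s) * wfun p T v s := by
    apply intervalIntegral.integral_mono_on htT'
      (intOn_to_ii (obj_intOn hp hy htT' hv hv01 hgcont hgnonneg hgdec) htT')
      (intOn_to_ii hint_hu htT')
    intro s hs
    exact stepA hp hy hv hv01 hgdec hs
  refine hA.trans ?_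
  -- step B : the partition argument
  set C : ℝ := g y - hf U with hC_def
  have hC_nonneg : 0 ≤ C := by
    have := hf_nonneg U (Set.right_mem_Icc.2 hyU.le)
    have h2 := hf_le U (Set.right_mem_Icc.2 hyU.le)
    linarith
  have key : ∀ n : ℕ, 0 < n →
      (∫ s in t..T, hf (uf s) * wfun p T v s)
        ≤ (∫ r in y..U, hf r) + C * ((T - t)/n) := by
    intro n hn
    have hnR : (0:ℝ) < n := by exact_mod_cast hn
    set δ : ℝ := (T - t)/n with hδ_def
    have hδpos : 0 < δ := div_pos (by linarith) hnR
    set sf : ℕ → ℝ := fun i => t + i * δ with hsf_def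
    have hsf0 : sf 0 = t := by simp [hsf_def]
    have hsfn : sf n = T := by
      rw [hsf_def]
      simp only []
      rw [hδ_def]
      field_simp
      ring
    have hsf_mono : ∀ i j : ℕ, i ≤ j → sf i ≤ sf j := by
      intro i j hij
      have hij' : (i:ℝ) ≤ j := by exact_mod_cast hij
      rw [hsf_def]
      simp only []
      nlinarith
    have hsf_mem : ∀ i, i ≤ n → sf i ∈ Set.Icc t T := by
      intro i hi
      constructor
      · rw [← hsf0]; exact hsf_mono 0 i (Nat.zero_le _)
      · rw [← hsfn]; exact hsf_mono i n hi
    have hsf_succ : ∀ i : ℕ, sf (i+1) - sf i = δ := by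
      intro i
      rw [hsf_def]
      simp only []
      push_cast
      ring
    have hpint : ∀ i, i < n → IntervalIntegrable (fun s => hf (uf s) * wfun p T v s)
        volume (sf i) (sf (i+1)) := by
      intro i hi
      apply IntegrableOn.intervalIntegrable
      apply hint_hu.mono_set
      rw [Set.uIcc_of_le (hsf_mono i (i+1) (Nat.le_succ _))]
      exact Set.Icc_subset_Icc (hsf_mem i hi.le).1 (hsf_mem (i+1) (Nat.succ_le_of_lt hi)).2
    have hfint : ∀ i, i < n → IntervalIntegrable hf volume (uf (sf i)) (uf (sf (i+1))) := by
      intro i hi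
      apply ContinuousOn.intervalIntegrable
      apply hf_contOn.mono
      have h1 := huf_mem _ (hsf_mem i hi.le)
      have h2 := huf_mem _ (hsf_mem (i+1) (Nat.succ_le_of_lt hi))
      rw [Set.uIcc_eq_union]
      exact Set.union_subset (Set.Icc_subset_Icc h1.1 h2.2) (Set.Icc_subset_Icc h2.1 h1.2)
    have hsum : (∫ s in t..T, hf (uf s) * wfun p T v s)
        = ∑ i ∈ Finset.range n, ∫ s in sf i..sf (i+1), hf (uf s) * wfun p T v s := by
      have h := intervalIntegral.sum_integral_adjacent_intervals (a := sf) (n := n)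
        (fun k hk => hpint k hk)
      rw [hsf0, hsfn] at h
      exact h.symm
    have hpiece : ∀ i, i < n → (∫ s in sf i..sf (i+1), hf (uf s) * wfun p T v s)
        ≤ (∫ r in uf (sf (i+1))..uf (sf i), hf r)
          + (hf (uf (sf (i+1))) - hf (uf (sf i))) * δ := by
      intro i hi
      have hmemi := hsf_mem i hi.le
      have hmemi1 := hsf_mem (i+1) (Nat.succ_le_of_lt hi)
      have hle : sf i ≤ sf (i+1) := hsf_mono i (i+1) (Nat.le_succ _)
      have hcd : uf (sf (i+1)) ≤ uf (sf i) := ufun_anti hp hv hv01 hmemi hmemi1 hle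
      have hcy : y ≤ uf (sf (i+1)) := (huf_mem _ hmemi1).1
      have hdU : uf (sf i) ≤ U := (huf_mem _ hmemi).2
      have hdsub : uf (sf i) - uf (sf (i+1)) = ∫ s in sf i..sf (i+1), wfun p T v s :=
        ufun_sub hp hv hv01 hmemi hmemi1
      have hwle : uf (sf i) - uf (sf (i+1)) ≤ δ := by
        rw [hdsub]
        have h1 : (∫ s in sf i..sf (i+1), wfun p T v s) ≤ ∫ s in sf i..sf (i+1), (1:ℝ) := by
          apply intervalIntegral.integral_mono_on hle (wfun_ii hp hv hv01 hmemi hmemi1)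
            intervalIntegrable_const
          intro s hs
          have hs' : s ∈ Set.Icc t T := ⟨hmemi.1.trans hs.1, hs.2.trans hmemi1.2⟩
          have h3 := (hv01 s hs').1
          have h4 := (hv01 s hs').2
          have h5 : Real.exp ((s - T)/p) ≤ 1 := by
            calc Real.exp ((s - T)/p) ≤ Real.exp 0 :=
                  Real.exp_le_exp.2 (div_nonpos_of_nonpos_of_nonneg (by linarith [hs'.2]) hp.le)
              _ = 1 := Real.exp_zero
          rw [wfun]
          nlinarith [Real.exp_pos ((s - T)/p)]
        rw [intervalIntegral.integral_const, smul_eq_mul, mul_one, hsf_succ i] at h1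
        exact h1
      have key1 : (∫ s in sf i..sf (i+1), hf (uf s) * wfun p T v s)
          ≤ hf (uf (sf (i+1))) * (uf (sf i) - uf (sf (i+1))) := by
        have h1 : (∫ s in sf i..sf (i+1), hf (uf s) * wfun p T v s)
            ≤ ∫ s in sf i..sf (i+1), hf (uf (sf (i+1))) * wfun p T v s := by
          apply intervalIntegral.integral_mono_on hle (hpint i hi)
            ((wfun_ii hp hv hv01 hmemi hmemi1).const_mul _)
          intro s hs
          have hs' : s ∈ Set.Icc t T := ⟨hmemi.1.trans hs.1, hs.2.trans hmemi1.2⟩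
          have hus : uf (sf (i+1)) ≤ uf s := ufun_anti hp hv hv01 hs' hmemi1 hs.2
          have husU : uf s ≤ U := (huf_mem s hs').2
          have hhh : hf (uf s) ≤ hf (uf (sf (i+1))) :=
            hfun_anti hp hy hgdec (lt_of_lt_of_le hy hcy) hus (lt_of_le_of_lt husU hUpy)
          have hw : 0 ≤ wfun p T v s := by
            rw [wfun]
            have := (hv01 s hs').1
            positivity
          exact mul_le_mul_of_nonneg_right hhh hw
        rw [intervalIntegral.integral_const_mul, ← hdsub] at h1
        exact h1
      have I1 : hf (uf (sf i)) * (uf (sf i) - uf (sf (i+1)))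
          ≤ ∫ r in uf (sf (i+1))..uf (sf i), hf r := by
        have h1 : (∫ r in uf (sf (i+1))..uf (sf i), hf (uf (sf i)))
            ≤ ∫ r in uf (sf (i+1))..uf (sf i), hf r := by
          apply intervalIntegral.integral_mono_on hcd intervalIntegrable_const (hfint i hi).symm
          intro r hr
          exact hfun_anti hp hy hgdec (lt_of_lt_of_le hy (hcy.trans hr.1)) hr.2
            (lt_of_le_of_lt hdU hUpy)
        rw [intervalIntegral.integral_const, smul_eq_mul] at h1
        calc hf (uf (sf i)) * (uf (sf i) - uf (sf (i+1)))
            = (uf (sf i) - uf (sf (i+1))) * hf (uf (sf i)) := by ring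
          _ ≤ ∫ r in uf (sf (i+1))..uf (sf i), hf r := h1
      have hdiff : 0 ≤ hf (uf (sf (i+1))) - hf (uf (sf i)) := by
        have := hfun_anti hp hy hgdec (lt_of_lt_of_le hy hcy) hcd (lt_of_le_of_lt hdU hUpy)
        linarith
      have := mul_le_mul_of_nonneg_left hwle hdiff
      nlinarith [key1, I1]
    have hsum_le := Finset.sum_le_sum (fun i hi => hpiece i (Finset.mem_range.1 hi))
    have htel1 : ∑ i ∈ Finset.range n, (∫ r in uf (sf (i+1))..uf (sf i), hf r)
        = ∫ r in y..U, hf r := by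
      have h2 := intervalIntegral.sum_integral_adjacent_intervals
        (a := fun i => uf (sf i)) (n := n) (fun k hk => hfint k hk)
      simp only [hsf0, hsfn] at h2
      have h3 : ∀ i ∈ Finset.range n, (∫ r in uf (sf (i+1))..uf (sf i), hf r)
          = -(∫ r in uf (sf i)..uf (sf (i+1)), hf r) := by
        intro i _
        rw [intervalIntegral.integral_symm]
      rw [Finset.sum_congr rfl h3, Finset.sum_neg_distrib, h2]
      have h4 : uf T = y := ufun_T
      rw [h4, hut, intervalIntegral.integral_symm, neg_neg]
    have htel2 : ∑ i ∈ Finset.range n, (hf (uf (sf (i+1))) - hf (uf (sf i))) = g y - hf U := by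
      rw [Finset.sum_range_sub (f := fun i => hf (uf (sf i)))]
      have h4 : uf T = y := ufun_T
      simp only [hsf0, hsfn, hut, h4]
      rw [hhf_def, hfun_y hp hy]
    calc (∫ s in t..T, hf (uf s) * wfun p T v s)
        = ∑ i ∈ Finset.range n, ∫ s in sf i..sf (i+1), hf (uf s) * wfun p T v s := hsum
      _ ≤ ∑ i ∈ Finset.range n, ((∫ r in uf (sf (i+1))..uf (sf i), hf r)
            + (hf (uf (sf (i+1))) - hf (uf (sf i))) * δ) := hsum_le
      _ = (∑ i ∈ Finset.range n, (∫ r in uf (sf (i+1))..uf (sf i), hf r))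
            + (∑ i ∈ Finset.range n, (hf (uf (sf (i+1))) - hf (uf (sf i)))) * δ := by
          rw [Finset.sum_add_distrib, Finset.sum_mul]
      _ = (∫ r in y..U, hf r) + C * δ := by rw [htel1, htel2, hC_def]
      _ = (∫ r in y..U, hf r) + C * ((T - t)/n) := by rw [hδ_def]
  -- conclude
  have : ∀ ε > (0:ℝ), (∫ s in t..T, hf (uf s) * wfun p T v s) ≤ (∫ r in y..U, hf r) + ε := by
    intro ε hε
    obtain ⟨n, hn⟩ := exists_nat_gt (max 1 (C * (T - t) / ε))
    have hn1 : (1:ℝ) < n := lt_of_le_of_lt (le_max_left _ _) hn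
    have hn0 : 0 < n := by exact_mod_cast lt_trans zero_lt_one hn1
    have hnR : (0:ℝ) < n := by exact_mod_cast hn0
    have h2 : C * (T - t) / (n:ℝ) ≤ ε := by
      have h3 : C * (T - t) / ε < n := lt_of_le_of_lt (le_max_right _ _) hn
      rw [div_le_iff₀ hnR]
      calc C * (T - t) = (C * (T - t) / ε) * ε := by field_simp
        _ ≤ (n:ℝ) * ε := mul_le_mul_of_nonneg_right h3.le hε.le
        _ = ε * n := by ring
    calc (∫ s in t..T, hf (uf s) * wfun p T v s)
        ≤ (∫ r in y..U, hf r) + C * ((T - t)/n) := key n hn0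
      _ = (∫ r in y..U, hf r) + C * (T - t) / n := by ring
      _ ≤ (∫ r in y..U, hf r) + ε := by linarith
  exact le_of_forall_pos_le_add this

end upper

section tau

variable {p y t T x τ : ℝ} {g : ℝ → ℝ}

lemma tau_eq (hp : 0 < p)
    (hτ : Real.exp (τ / p) = Real.exp (T / p) * (1 + y / p) - (x / p) * Real.exp (t / p)) :
    p * Real.exp ((τ - t)/p) = Real.exp ((T - t)/p) * (y + p) - x := by
  have e1 : Real.exp (τ/p) = Real.exp ((τ - t)/p) * Real.exp (t/p) := by
    rw [← Real.exp_add]; congr 1; field_simp; ring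
  have e2 : Real.exp (T/p) = Real.exp ((T - t)/p) * Real.exp (t/p) := by
    rw [← Real.exp_add]; congr 1; field_simp; ring
  rw [e1, e2] at hτ
  have hept : Real.exp (t/p) ≠ 0 := Real.exp_ne_zero _
  have hp' : p ≠ 0 := hp.ne'
  field_simp at hτ
  apply mul_right_cancel₀ hept
  rw [hτ]; ring

lemma tau_gt (hp : 0 < p) (htT : t < T)
    (hx2 : x < Real.exp ((T - t) / p) * (y + p) - p)
    (hτ' : p * Real.exp ((τ - t)/p) = Real.exp ((T - t)/p) * (y + p) - x) :
    t < τ := by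
  have h1 : 1 < Real.exp ((τ - t)/p) := by nlinarith
  rw [show (1:ℝ) = Real.exp 0 from Real.exp_zero.symm] at h1
  have h2 := Real.exp_lt_exp.1 h1
  have h3 : 0 < τ - t := by
    by_contra h
    push_neg at h
    have : (τ - t)/p ≤ 0 := div_nonpos_of_nonpos_of_nonneg h hp.le
    linarith
  linarith

lemma tau_lt (hp : 0 < p) (hy : 0 < y) (htT : t < T)
    (hx1 : Real.exp ((T - t) / p) * y < x)
    (hτ' : p * Real.exp ((τ - t)/p) = Real.exp ((T - t)/p) * (y + p) - x) :
    τ < T := by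
  have h1 : Real.exp ((τ - t)/p) < Real.exp ((T - t)/p) := by nlinarith
  have h2 := Real.exp_lt_exp.1 h1
  have h3 : τ - t < T - t := (div_lt_div_iff_of_pos_right hp).1 h2
  linarith

end tau

section xp

variable {p y t T x τ : ℝ} {g : ℝ → ℝ}

lemma xp_ge (hp : 0 < p) (hy : 0 < y) {s : ℝ} (hs : s ≤ T) : y ≤ xpTraj p y T s := by
  rw [xpTraj]
  have h1 : 1 ≤ Real.exp ((T - s)/p) := by
    rw [← Real.exp_zero]
    exact Real.exp_le_exp.2 (div_nonneg (by linarith) hp.le)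
  nlinarith

lemma xpb_contOn (hp : 0 < p) (hy : 0 < y) (hgcont : ContinuousOn g (Set.Ioi 0)) {a : ℝ} :
    ContinuousOn (fun s => g (xpTraj p y T s) * Real.exp (-(T - s) / p)) (Set.Icc a T) := by
  apply ContinuousOn.mul _ (Continuous.continuousOn (by fun_prop))
  apply hgcont.comp
  · apply Continuous.continuousOn
    unfold xpTraj
    fun_prop
  · intro s hs
    exact Set.mem_Ioi.2 (lt_of_lt_of_le hy (xp_ge hp hy hs.2))

lemma target_eq (hp : 0 < p) (hy : 0 < y) (htT : t < T)
    (hgcont : ContinuousOn g (Set.Ioi 0))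
    (hx1 : Real.exp ((T - t) / p) * y < x)
    (hx2 : x < Real.exp ((T - t) / p) * (y + p) - p)
    (hτ' : p * Real.exp ((τ - t)/p) = Real.exp ((T - t)/p) * (y + p) - x)
    (hτt : t < τ) (hτT : τ < T) :
    (∫ s in τ..T, g (xpTraj p y T s) * Real.exp (-(T - s) / p))
      = ∫ r in y..(Real.exp ((t - T) / p) * x), hfun g p y r := by
  set U : ℝ := Real.exp ((t - T)/p) * x with hU_def
  have hee : Real.exp ((T - t)/p) * Real.exp ((t - T)/p) = 1 := by
    rw [← Real.exp_add, show (T - t)/p + (t - T)/p = 0 by ring, Real.exp_zero]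
  have hτ'' : p * Real.exp ((τ - T)/p) = p + y - U := by
    have e1 : Real.exp ((τ - T)/p) = Real.exp ((τ - t)/p) * Real.exp ((t - T)/p) := by
      rw [← Real.exp_add]; congr 1; ring
    rw [e1, hU_def]
    have := congrArg (fun z => z * Real.exp ((t - T)/p)) hτ'
    rw [mul_assoc] at this
    rw [this]
    rw [sub_mul, mul_comm (Real.exp ((T - t)/p)) (y + p), mul_assoc, hee]
    ring
  have hyU : y < U := by
    rw [hU_def]
    calc y = (Real.exp ((T - t)/p) * y) * Real.exp ((t - T)/p) := by
          rw [mul_comm (Real.exp ((T - t)/p)) y, mul_assoc, hee, mul_one]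
      _ < Real.exp ((t - T)/p) * x := by
          rw [mul_comm]
          exact mul_lt_mul_of_pos_left hx1 (Real.exp_pos _)
  have hUpy : U < p + y := by
    have h1 : 0 < p * Real.exp ((τ - T)/p) := by positivity
    linarith
  -- substitution
  set φ : ℝ → ℝ := fun s => y + p - p * Real.exp ((s - T)/p) with hφ_def
  have hφT : φ T = y := by simp [hφ_def]
  have hφτ : φ τ = U := by rw [hφ_def]; simp only []; linarith [hτ'']
  have hderiv : ∀ s ∈ Set.uIcc τ T, HasDerivAt φ (-Real.exp ((s - T)/p)) s := by
    intro s _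
    have h1 : HasDerivAt (fun u : ℝ => (u - T)/p) (1/p) s :=
      ((hasDerivAt_id s).sub_const T).div_const p
    have h2 := (Real.hasDerivAt_exp ((s - T)/p)).comp s h1
    have h3 := (h2.const_mul p).const_sub (y + p)
    convert h3 using 1
    · rfl
    · rfl
    · rfl
    · field_simp
  have hφ'cont : ContinuousOn (fun s => -Real.exp ((s - T)/p)) (Set.uIcc τ T) :=
    Continuous.continuousOn (by fun_prop)
  have himg : ContinuousOn (hfun g p y) (φ '' Set.uIcc τ T) := by
    apply (hfun_contOn hp hy hgcont hUpy).mono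
    rintro r ⟨s, hs, rfl⟩
    rw [Set.uIcc_of_le hτT.le] at hs
    have h1 : Real.exp ((s - T)/p) ≤ 1 := by
      rw [← Real.exp_zero]
      exact Real.exp_le_exp.2 (div_nonpos_of_nonpos_of_nonneg (by linarith [hs.2]) hp.le)
    have h2 : Real.exp ((τ - T)/p) ≤ Real.exp ((s - T)/p) :=
      Real.exp_le_exp.2 ((div_le_div_iff_of_pos_right hp).2 (by linarith [hs.1]))
    constructor
    · rw [hφ_def]; simp only []; nlinarith
    · rw [hφ_def]; simp only []; nlinarith
  have hsub := intervalIntegral.integral_comp_smul_deriv' hderiv hφ'cont himg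
  rw [hφτ, hφT] at hsub
  have hLHS : (∫ s in τ..T, (-Real.exp ((s - T)/p)) • (hfun g p y ∘ φ) s)
      = -∫ s in τ..T, g (xpTraj p y T s) * Real.exp (-(T - s) / p) := by
    rw [← intervalIntegral.integral_neg]
    apply intervalIntegral.integral_congr
    intro s hs
    rw [Set.uIcc_of_le hτT.le] at hs
    have hb : (0:ℝ) < Real.exp ((s - T)/p) := Real.exp_pos _
    have hee2 : Real.exp ((T - s)/p) * Real.exp ((s - T)/p) = 1 := by
      rw [← Real.exp_add, show (T - s)/p + (s - T)/p = 0 by ring, Real.exp_zero]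
    have harg : p * φ s / (p + y - φ s) = xpTraj p y T s := by
      have hden : p + y - φ s = p * Real.exp ((s - T)/p) := by rw [hφ_def]; ring
      rw [hden, xpTraj, hφ_def]
      rw [div_eq_iff (by positivity)]
      simp only []
      linear_combination (-(p * (y + p))) * hee2
    have hbe : Real.exp (-(T - s)/p) = Real.exp ((s - T)/p) := by congr 1; ring
    simp only [Function.comp, smul_eq_mul, hfun, harg, hbe]
    ring
  rw [hLHS] at hsub
  have := intervalIntegral.integral_symm (a := y) (b := U) (f := hfun g p y) (μ := volume)
  rw [this] at hsub
  linarith [hsub]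

end xp

section lower

variable {p y t T x τ : ℝ} {g : ℝ → ℝ}

lemma lower_bound (hp : 0 < p) (hy : 0 < y) (htT : t < T)
    (hgcont : ContinuousOn g (Set.Ioi 0))
    (hgnonneg : ∀ z > (0:ℝ), 0 ≤ g z)
    (hgdec : AntitoneOn g (Set.Ioi 0))
    (hx1 : Real.exp ((T - t) / p) * y < x)
    (hx2 : x < Real.exp ((T - t) / p) * (y + p) - p)
    (hτ' : p * Real.exp ((τ - t)/p) = Real.exp ((T - t)/p) * (y + p) - x)
    (hτt : t < τ) {σ : ℝ} (hσ1 : τ < σ) (hσ2 : σ < T) :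
    ∃ v : ℝ → ℝ, Measurable v ∧ (∀ s ∈ Set.Icc t T, 0 < v s ∧ v s ≤ 1) ∧
      traj p y T v t = x ∧
      (∫ s in σ..T, g (xpTraj p y T s) * Real.exp (-(T - s) / p))
        ≤ ∫ s in t..T, g (traj p y T v s / v s) * Real.exp (-(T - s) / p) * v s := by
  have htσ : t < σ := hτt.trans hσ1
  set A1 : ℝ := p * Real.exp ((σ - t)/p) - p with hA1_def
  set A2 : ℝ := p * Real.exp ((T - t)/p) - p * Real.exp ((σ - t)/p) with hA2_def
  have hexpσ : 1 < Real.exp ((σ - t)/p) := by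
    rw [← Real.exp_zero]
    exact Real.exp_lt_exp.2 (div_pos (by linarith) hp)
  have hA1pos : 0 < A1 := by rw [hA1_def]; nlinarith
  set ε : ℝ := (x - Real.exp ((T - t)/p) * y - A2) / A1 with hε_def
  have hτσ : Real.exp ((τ - t)/p) < Real.exp ((σ - t)/p) :=
    Real.exp_lt_exp.2 ((div_lt_div_iff_of_pos_right hp).2 (by linarith))
  have hnum_pos : 0 < x - Real.exp ((T - t)/p) * y - A2 := by
    rw [hA2_def]; nlinarith
  have hεpos : 0 < ε := div_pos hnum_pos hA1pos
  have hεle : ε ≤ 1 := by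
    rw [hε_def, div_le_one hA1pos, hA1_def, hA2_def]
    nlinarith
  set v : ℝ → ℝ := fun s => if s < σ then ε else 1 with hv_def
  have hv : Measurable v := Measurable.ite measurableSet_Iio measurable_const measurable_const
  have hv01 : ∀ s ∈ Set.Icc t T, 0 < v s ∧ v s ≤ 1 := by
    intro s _
    rw [hv_def]
    simp only []
    by_cases h : s < σ
    · rw [if_pos h]; exact ⟨hεpos, hεle⟩
    · rw [if_neg h]; exact ⟨one_pos, le_refl 1⟩
  -- integrability of the control integrand
  have hbint : IntegrableOn (fun s' => Real.exp ((s' - t)/p) * v s') (Set.Icc t T) volume := by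
    apply Integrable.mono' (integrable_const (Real.exp ((T - t)/p)))
    · exact ((Real.measurable_exp.comp (by fun_prop)).mul hv).aestronglyMeasurable
    · rw [ae_restrict_iff' measurableSet_Icc]
      filter_upwards with s hs
      have h1 := (hv01 s hs).1
      have h2 := (hv01 s hs).2
      have h3 : Real.exp ((s - t)/p) ≤ Real.exp ((T - t)/p) :=
        Real.exp_le_exp.2 ((div_le_div_iff_of_pos_right hp).2 (by linarith [hs.2]))
      rw [Real.norm_eq_abs, abs_of_nonneg (by positivity)]
      nlinarith [Real.exp_pos ((s - t)/p)]
  have hii1 : IntervalIntegrable (fun s' => Real.exp ((s' - t)/p) * v s') volume t σ :=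
    IntegrableOn.intervalIntegrable (hbint.mono_set
      (by rw [Set.uIcc_of_le htσ.le]; exact Set.Icc_subset_Icc le_rfl hσ2.le))
  have hii2 : IntervalIntegrable (fun s' => Real.exp ((s' - t)/p) * v s') volume σ T :=
    IntegrableOn.intervalIntegrable (hbint.mono_set
      (by rw [Set.uIcc_of_le hσ2.le]; exact Set.Icc_subset_Icc htσ.le le_rfl))
  have hσae : ∀ᵐ s' : ℝ, s' ≠ σ := by
    have hset : {a : ℝ | ¬ a ≠ σ} = {σ} := by ext a; simp
    rw [MeasureTheory.ae_iff, hset]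
    exact measure_singleton σ
  have hI1 : (∫ s' in t..σ, Real.exp ((s' - t)/p) * v s') = ε * A1 := by
    have hcongr : ∀ᵐ s', s' ∈ Set.uIoc t σ →
        Real.exp ((s' - t)/p) * v s' = ε * Real.exp ((s' - t)/p) := by
      filter_upwards [hσae] with s' hne hmem
      rw [Set.uIoc_of_le htσ.le] at hmem
      have : s' < σ := lt_of_le_of_ne hmem.2 hne
      rw [hv_def]
      simp only [if_pos this]
      ring
    rw [intervalIntegral.integral_congr_ae hcongr, intervalIntegral.integral_const_mul,
      exp_int hp t t σ]
    simp [hA1_def]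
  have hI2 : (∫ s' in σ..T, Real.exp ((s' - t)/p) * v s') = A2 := by
    have hcongr : Set.EqOn (fun s' => Real.exp ((s' - t)/p) * v s')
        (fun s' => Real.exp ((s' - t)/p)) (Set.uIcc σ T) := by
      intro s' hs'
      rw [Set.uIcc_of_le hσ2.le] at hs'
      rw [hv_def]
      simp only [if_neg (not_lt.2 hs'.1), mul_one]
    rw [intervalIntegral.integral_congr hcongr, exp_int hp t σ T]
  have hεA : ε * A1 = x - Real.exp ((T - t)/p) * y - A2 := by
    rw [hε_def]; field_simp
  have htrajt : traj p y T v t = x := by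
    rw [traj]
    have hsplit := intervalIntegral.integral_add_adjacent_intervals hii1 hii2
    rw [← hsplit, hI1, hI2, hεA]
    ring
  have htrajσ : ∀ s ∈ Set.Icc σ T, traj p y T v s = xpTraj p y T s := by
    intro s hs
    rw [traj, xpTraj]
    have hcongr : Set.EqOn (fun s' => Real.exp ((s' - s)/p) * v s')
        (fun s' => Real.exp ((s' - s)/p)) (Set.uIcc s T) := by
      intro s' hs'
      rw [Set.uIcc_of_le hs.2] at hs'
      have : ¬ s' < σ := not_lt.2 (hs.1.trans hs'.1)
      rw [hv_def]
      simp only [if_neg this, mul_one]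
    rw [intervalIntegral.integral_congr hcongr, exp_int hp s s T]
    simp
    ring
  refine ⟨v, hv, hv01, htrajt, ?_⟩
  -- split the objective at σ
  have hobj_int := obj_intOn (g := g) hp hy htT.le hv hv01 hgcont hgnonneg hgdec
  have hoi1 : IntervalIntegrable
      (fun s => g (traj p y T v s / v s) * Real.exp (-(T - s) / p) * v s) volume t σ :=
    IntegrableOn.intervalIntegrable (hobj_int.mono_set
      (by rw [Set.uIcc_of_le htσ.le]; exact Set.Icc_subset_Icc le_rfl hσ2.le))
  have hoi2 : IntervalIntegrable
      (fun s => g (traj p y T v s / v s) * Real.exp (-(T - s) / p) * v s) volume σ T :=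
    IntegrableOn.intervalIntegrable (hobj_int.mono_set
      (by rw [Set.uIcc_of_le hσ2.le]; exact Set.Icc_subset_Icc htσ.le le_rfl))
  have hsplit2 := intervalIntegral.integral_add_adjacent_intervals hoi1 hoi2
  have h_nonneg : 0 ≤ ∫ s in t..σ, g (traj p y T v s / v s) * Real.exp (-(T - s) / p) * v s := by
    apply intervalIntegral.integral_nonneg htσ.le
    intro s hs
    exact obj_nonneg hp hy hv hv01 hgnonneg ⟨hs.1, hs.2.trans hσ2.le⟩
  have heq2 : (∫ s in σ..T, g (traj p y T v s / v s) * Real.exp (-(T - s) / p) * v s)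
      = ∫ s in σ..T, g (xpTraj p y T s) * Real.exp (-(T - s) / p) := by
    apply intervalIntegral.integral_congr
    intro s hs
    rw [Set.uIcc_of_le hσ2.le] at hs
    have hv1 : v s = 1 := by simp only [hv_def, if_neg (not_lt.2 hs.1)]
    simp only [hv1, htrajσ s hs, div_one, mul_one]
  linarith [hsplit2, h_nonneg, heq2]

end lower

/-- Proposition 7.3: the value of the maximization problem
sup_{0<v≤1, x(t)=x} ∫_t^T g(x(s)/v(s)) e^{−(T−s)/p} v(s) ds equals
∫_{τ_{x,t}}^T g(x_p(s)) e^{−(T−s)/p} ds. -/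
theorem stmt_17 (p y t T x : ℝ) (hp : 0 < p) (hy : 0 < y) (htT : t < T)
    (g : ℝ → ℝ)
    (hgcont : ContinuousOn g (Set.Ioi 0))
    (hgnonneg : ∀ z > (0:ℝ), 0 ≤ g z)
    (hgdec : AntitoneOn g (Set.Ioi 0))
    (hx1 : Real.exp ((T - t) / p) * y < x)
    (hx2 : x < Real.exp ((T - t) / p) * (y + p) - p)
    (τ : ℝ)
    (hτ : Real.exp (τ / p)
        = Real.exp (T / p) * (1 + y / p) - (x / p) * Real.exp (t / p)) :
    t < τ ∧ τ < T ∧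
    IsLUB {c : ℝ | ∃ v : ℝ → ℝ, Measurable v ∧
        (∀ s ∈ Set.Icc t T, 0 < v s ∧ v s ≤ 1) ∧
        traj p y T v t = x ∧
        c = ∫ s in t..T, g (traj p y T v s / v s) * Real.exp (-(T - s) / p) * v s}
      (∫ s in τ..T, g (xpTraj p y T s) * Real.exp (-(T - s) / p)) := by
  have hτ' := tau_eq hp hτ
  have hτt := tau_gt hp htT hx2 hτ'
  have hτT := tau_lt hp hy htT hx1 hτ'
  have htarget := target_eq hp hy htT hgcont hx1 hx2 hτ' hτt hτT
  refine ⟨hτt, hτT, ?_, ?_⟩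
  · -- upper bound
    rintro c ⟨v, hv, hv01, hvt, rfl⟩
    rw [htarget]
    exact upper hp hy htT hgcont hgnonneg hgdec hx1 hx2 hv hv01 hvt
  · -- least upper bound
    intro c hc
    by_contra hlt
    push_neg at hlt
    set η : ℝ := (∫ s in τ..T, g (xpTraj p y T s) * Real.exp (-(T - s) / p)) - c with hη_def
    have hηpos : 0 < η := by rw [hη_def]; linarith
    have hgy0 : 0 ≤ g y := hgnonneg y hy
    have hgy1 : 0 < g y + 1 := by linarith
    set K : ℝ := η / (g y + 1) with hK_def
    have hKpos : 0 < K := div_pos hηpos hgy1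
    set σ : ℝ := min (τ + K) ((τ + T)/2) with hσ_def
    have hσ1 : τ < σ := lt_min (by linarith) (by linarith)
    have hσ2 : σ < T := lt_of_le_of_lt (min_le_right _ _) (by linarith)
    obtain ⟨v, hv, hv01, hvt, hge⟩ :=
      lower_bound hp hy htT hgcont hgnonneg hgdec hx1 hx2 hτ' hτt hσ1 hσ2
    have hle : (∫ s in t..T, g (traj p y T v s / v s) * Real.exp (-(T - s) / p) * v s) ≤ c :=
      hc ⟨v, hv, hv01, hvt, rfl⟩
    -- split target at σ
    have hcont := xpb_contOn (g := g) (T := T) hp hy hgcont (a := t)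
    have hiτσ : IntervalIntegrable
        (fun s => g (xpTraj p y T s) * Real.exp (-(T - s) / p)) volume τ σ := by
      apply ContinuousOn.intervalIntegrable
      apply hcont.mono
      rw [Set.uIcc_of_le hσ1.le]
      exact Set.Icc_subset_Icc hτt.le hσ2.le
    have hiσT : IntervalIntegrable
        (fun s => g (xpTraj p y T s) * Real.exp (-(T - s) / p)) volume σ T := by
      apply ContinuousOn.intervalIntegrable
      apply hcont.mono
      rw [Set.uIcc_of_le hσ2.le]
      exact Set.Icc_subset_Icc (hτt.le.trans hσ1.le) le_rfl
    have hsplit := intervalIntegral.integral_add_adjacent_intervals hiτσ hiσT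
    have hbound : (∫ s in τ..σ, g (xpTraj p y T s) * Real.exp (-(T - s) / p))
        ≤ (σ - τ) * g y := by
      have h1 : (∫ s in τ..σ, g (xpTraj p y T s) * Real.exp (-(T - s) / p))
          ≤ ∫ _ in τ..σ, g y := by
        apply intervalIntegral.integral_mono_on hσ1.le hiτσ intervalIntegrable_const
        intro s hs
        have hsT : s ≤ T := hs.2.trans hσ2.le
        have hxp : y ≤ xpTraj p y T s := xp_ge hp hy hsT
        have hg1 : g (xpTraj p y T s) ≤ g y :=
          hgdec (Set.mem_Ioi.2 hy) (Set.mem_Ioi.2 (lt_of_lt_of_le hy hxp)) hxp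
        have hg2 : 0 ≤ g (xpTraj p y T s) := hgnonneg _ (lt_of_lt_of_le hy hxp)
        have he1 : Real.exp (-(T - s)/p) ≤ 1 := by
          calc Real.exp (-(T - s)/p) ≤ Real.exp 0 := Real.exp_le_exp.2
                (div_nonpos_of_nonpos_of_nonneg (by linarith) hp.le)
            _ = 1 := Real.exp_zero
        have he2 := Real.exp_pos (-(T - s)/p)
        nlinarith
      rw [intervalIntegral.integral_const, smul_eq_mul] at h1
      exact h1
    have hστ : σ - τ ≤ K := by
      have := min_le_left (τ + K) ((τ + T)/2)
      rw [hσ_def]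
      linarith [this]
    have hKgy : K * (g y + 1) = η := by rw [hK_def]; field_simp
    have hfinal : (σ - τ) * g y < η := by nlinarith
    have : (∫ s in τ..T, g (xpTraj p y T s) * Real.exp (-(T - s) / p)) < 
        (∫ s in τ..T, g (xpTraj p y T s) * Real.exp (-(T - s) / p)) := by
      calc (∫ s in τ..T, g (xpTraj p y T s) * Real.exp (-(T - s) / p))
          = (∫ s in τ..σ, g (xpTraj p y T s) * Real.exp (-(T - s) / p))
            + ∫ s in σ..T, g (xpTraj p y T s) * Real.exp (-(T - s) / p) := hsplit.symm
        _ ≤ (σ - τ) * g y + ∫ s in σ..T, g (xpTraj p y T s) * Real.exp (-(T - s) / p) := by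
            linarith
        _ ≤ (σ - τ) * g y + c := by linarith [hge.trans hle]
        _ < η + c := by linarith
        _ = ∫ s in τ..T, g (xpTraj p y T s) * Real.exp (-(T - s) / p) := by
            rw [hη_def]; ring
    exact lt_irrefl _ this
end

section
/- (Consequence of Proposition 7.4.) Let p > 0 and let g : (0,∞) → [0,∞) be C¹ and decreasing, such that z ↦ −z g'(z) is decreasing, and assume g is C² on (0, z_∞), where z_∞ = sup{z > 0 : g'(z) < 0}. Fix y > 0 and t < T. Then for every measurable control v : [t,T] → [1,∞), the solution x(·) of dx(s)/ds = −x(s)/p − v(s) with x(T) = y satisfies ∫_t^T g(x(s)/v(s)) e^{−(T−s)/p} v(s) ds ≥ ∫_t^T g(x_p(s)) e^{−(T−s)/p} ds, where x_p(s) = e^{(T−s)/p}(y + p) − p is the trajectory with v ≡ 1. In other words, v ≡ 1 minimizes the cost ∫_t^T g(x(s)/v(s)) e^{−(T−s)/p} v(s) ds among all controls v ≥ 1. -/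
open MeasureTheory Real Filter Set

set_option linter.unusedSectionVars false

-- trajectory in terms of φ s' = exp(-(T-s')/p) * v s'
lemma traj_eq (p y T : ℝ) (hp : 0 < p) (v : ℝ → ℝ) (s : ℝ) :
    traj p y T v s
      = Real.exp ((T - s) / p) * (y + ∫ s' in s..T, Real.exp (-(T - s') / p) * v s') := by
  unfold traj
  rw [mul_add]
  congr 1
  rw [← intervalIntegral.integral_const_mul]
  apply intervalIntegral.integral_congr
  intro x hx
  simp only [← mul_assoc, ← Real.exp_add]
  field_simp
  rw [mul_comm (v x)]
  congr 2
  ring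

-- ∫ s..T exp(-(T-s')/p) = p - p exp(-(T-s)/p)
lemma exp_prim (p T : ℝ) (hp : 0 < p) (s : ℝ) :
    ∫ s' in s..T, Real.exp (-(T - s') / p) = p - p * Real.exp (-(T - s) / p) := by
  have hd : ∀ x ∈ uIcc s T, HasDerivAt (fun x => p * Real.exp (-(T - x) / p))
      (Real.exp (-(T - x) / p)) x := by
    intro x _
    have h1 : HasDerivAt (fun x : ℝ => -(T - x) / p) (1 / p) x := by
      have : HasDerivAt (fun x : ℝ => -(T - x)) 1 x := by
        exact (((hasDerivAt_id x).const_sub T).neg).congr_deriv (by simp)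
      simpa using this.div_const p
    have h2 := (h1.exp).const_mul p
    refine h2.congr_deriv ?_
    field_simp
  have hint : IntervalIntegrable (fun x => Real.exp (-(T - x) / p)) volume s T := by
    apply Continuous.intervalIntegrable
    continuity
  have := intervalIntegral.integral_eq_sub_of_hasDerivAt hd hint
  rw [this]
  simp


-- junk trajectory
lemma traj_junk (p y T : ℝ) (hp : 0 < p) (v : ℝ → ℝ) (s : ℝ) (hsT : s ≤ T)
    (h : ¬ IntegrableOn (fun s' => Real.exp (-(T - s') / p) * v s') (Ioc s T) volume) :
    traj p y T v s = Real.exp ((T - s) / p) * y := by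
  unfold traj
  have : ¬ IntervalIntegrable (fun s' => Real.exp ((s' - s) / p) * v s') volume s T := by
    intro hII
    apply h
    have hIO := (intervalIntegrable_iff_integrableOn_Ioc_of_le hsT).1 hII
    have : (fun s' => Real.exp (-(T - s') / p) * v s')
        = fun s' => Real.exp (-(T - s) / p) * (Real.exp ((s' - s) / p) * v s') := by
      funext x
      rw [← mul_assoc, ← Real.exp_add]
      congr 2
      field_simp
      ring
    rw [this]
    exact hIO.const_mul _
  rw [intervalIntegral.integral_undef this, add_zero]


noncomputable def Hb (g : ℝ → ℝ) (y p σ : ℝ) : ℝ :=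
  if σ < y + p then g (p * max σ y / (y + p - max σ y)) else 0

section HbProps
variable {g : ℝ → ℝ} {y p : ℝ} (hp : 0 < p) (hy : 0 < y)
  (hgnonneg : ∀ z > (0:ℝ), 0 ≤ g z) (hgdec : AntitoneOn g (Set.Ioi 0))

include hp hy in
lemma arg_pos {σ : ℝ} (hσ : σ < y + p) : 0 < p * max σ y / (y + p - max σ y) := by
  have h1 : 0 < max σ y := lt_of_lt_of_le hy (le_max_right σ y)
  have h2 : max σ y < y + p := max_lt hσ (by linarith)
  have h3 : 0 < y + p - max σ y := by linarith
  positivity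

include hp hy hgnonneg in
lemma Hb_nonneg (σ : ℝ) : 0 ≤ Hb g y p σ := by
  unfold Hb
  split_ifs with h
  · exact hgnonneg _ (arg_pos hp hy h)
  · exact le_refl _

include hp hy hgnonneg hgdec in
lemma Hb_antitone : Antitone (Hb g y p) := by
  intro a b hab
  unfold Hb
  split_ifs with h1 h2 h2
  · -- both < y+p
    have ha1 : 0 < max a y := lt_of_lt_of_le hy (le_max_right a y)
    have hb1 : 0 < max b y := lt_of_lt_of_le hy (le_max_right b y)
    have ha2 : max a y < y + p := max_lt h2 (by linarith)
    have hb2 : max b y < y + p := max_lt h1 (by linarith)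
    have hm : max a y ≤ max b y := max_le_max hab le_rfl
    apply hgdec (arg_pos hp hy h2) (arg_pos hp hy h1)
    rw [div_le_div_iff₀ (by linarith) (by linarith)]
    nlinarith [mul_nonneg (mul_nonneg hp.le (sub_nonneg.2 hm)) (by linarith : (0:ℝ) ≤ y + p)]
  · exact absurd h1 (not_lt.2 (le_trans (not_lt.1 h2) hab))
  · exact hgnonneg _ (arg_pos hp hy h2)
  · exact le_refl _

include hp in
omit hy in
lemma Hb_eq_gy {σ : ℝ} (hσ : σ ≤ y) : Hb g y p σ = g y := by
  unfold Hb
  rw [max_eq_right hσ, if_pos (by linarith)]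
  congr 1
  rw [show y + p - y = p by ring]
  exact mul_div_cancel_left₀ y hp.ne'

include hp hy hgnonneg hgdec in
lemma Hb_le_gy (σ : ℝ) : Hb g y p σ ≤ g y := by
  rcases le_total σ y with h | h
  · exact (Hb_eq_gy hp h).le
  · have h2 := Hb_antitone hp hy hgnonneg hgdec h
    rwa [Hb_eq_gy hp (le_refl y)] at h2

end HbProps


section CoV
variable {g : ℝ → ℝ} {y p t T : ℝ} (hp : 0 < p) (hy : 0 < y) (htT : t < T)
  (hg1 : ContDiffOn ℝ 1 g (Set.Ioi 0))

include hp hy hg1 in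
lemma Hb_contOn {b : ℝ} (hb : b < y + p) : ContinuousOn (Hb g y p) (Icc y b) := by
  have key : ContinuousOn (fun σ => g (p * σ / (y + p - σ))) (Icc y b) := by
    apply hg1.continuousOn.comp
    · apply ContinuousOn.div
      · exact (continuous_const.mul continuous_id).continuousOn
      · exact (continuous_const.sub continuous_id).continuousOn
      · intro x hx
        have hlt : x < y + p := lt_of_le_of_lt hx.2 hb
        exact sub_ne_zero.2 (ne_of_gt hlt)
    · intro x hx
      have hx1 : 0 < x := lt_of_lt_of_le hy hx.1
      have hx2 : x < y + p := lt_of_le_of_lt hx.2 hb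
      exact mem_Ioi.2 (div_pos (by positivity) (by linarith))
  apply key.congr
  intro x hx
  have hx1 : y ≤ x := hx.1
  have hx2 : x < y + p := lt_of_le_of_lt hx.2 hb
  unfold Hb
  rw [if_pos hx2, max_eq_left hx1]

include hp hy htT hg1 in
lemma cov_reference :
    ∫ s in t..T, g (xpTraj p y T s) * Real.exp (-(T - s) / p)
      = ∫ σ in y..(y + p - p * Real.exp (-(T - t) / p)), Hb g y p σ := by
  set Up := y + p - p * Real.exp (-(T - t) / p) with hUp
  set up : ℝ → ℝ := fun s => y + p - p * Real.exp (-(T - s) / p) with hup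
  have hexp_le_one : ∀ s, s ≤ T → Real.exp (-(T - s) / p) ≤ 1 := by
    intro s hs
    rw [← Real.exp_zero]
    apply Real.exp_le_exp.2
    have : 0 ≤ T - s := by linarith
    have h2 : -(T-s) ≤ 0 := by linarith
    apply div_nonpos_of_nonpos_of_nonneg h2 hp.le
  have hup_mem : ∀ s ∈ uIcc t T, up s ∈ Icc y Up := by
    intro s hs
    rw [uIcc_of_le htT.le] at hs
    constructor
    · have := hexp_le_one s hs.2
      simp only [hup]
      nlinarith
    · simp only [hup, hUp]
      have : Real.exp (-(T - t) / p) ≤ Real.exp (-(T - s) / p) := by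
        apply Real.exp_le_exp.2
        rw [div_le_div_iff_of_pos_right hp] -- maybe wrong name
        linarith [hs.1]
      nlinarith
  have hUp_lt : Up < y + p := by
    have : 0 < Real.exp (-(T - t) / p) := Real.exp_pos _
    simp only [hUp]; nlinarith
  have hderiv : ∀ s ∈ uIcc t T, HasDerivAt up (-Real.exp (-(T - s) / p)) s := by
    intro s _
    have h1 : HasDerivAt (fun x : ℝ => -(T - x) / p) (1 / p) s := by
      have : HasDerivAt (fun x : ℝ => -(T - x)) 1 s := by
        exact (((hasDerivAt_id s).const_sub T).neg).congr_deriv (by simp)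
      simpa using this.div_const p
    have h2 := (h1.exp).const_mul p
    have h3 := (hasDerivAt_const s (y + p)).sub h2
    refine h3.congr_deriv ?_
    field_simp
    ring
  have hcov := intervalIntegral.integral_comp_smul_deriv'
    (f := up) (f' := fun s => -Real.exp (-(T - s) / p)) (g := Hb g y p) (a := t) (b := T)
    hderiv (by apply Continuous.continuousOn; continuity)
    ((Hb_contOn hp hy hg1 hUp_lt).mono (by
      intro x hx
      obtain ⟨s, hs, rfl⟩ := hx
      exact hup_mem s hs))
  have hupt : up t = Up := rfl
  have hupT : up T = y := by simp [hup]
  rw [hupt, hupT] at hcov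
  have hlhs : ∀ s ∈ uIcc t T,
      g (xpTraj p y T s) * Real.exp (-(T - s) / p)
        = -((-Real.exp (-(T - s) / p)) • (Hb g y p ∘ up) s) := by
    intro s hs
    rw [uIcc_of_le htT.le] at hs
    have hmem := hup_mem s (by rw [uIcc_of_le htT.le]; exact hs)
    have h1 : Hb g y p (up s) = g (xpTraj p y T s) := by
      unfold Hb
      rw [if_pos (by
        have : 0 < Real.exp (-(T - s) / p) := Real.exp_pos _
        simp only [hup]; nlinarith),
        max_eq_left hmem.1]
      congr 1
      have hE : Real.exp ((s - T) / p) * Real.exp ((T - s) / p) = 1 := by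
        rw [← Real.exp_add, (by ring : (s - T) / p + (T - s) / p = 0), Real.exp_zero]
      unfold xpTraj
      rw [hup]
      field_simp
      have hE2 : rexp (-((T - s) / p)) * rexp ((T - s) / p) = 1 := by
        rw [← Real.exp_add, neg_add_cancel, Real.exp_zero]
      linear_combination -(p * (y + p)) * hE2
    simp only [Function.comp_apply, smul_eq_mul, h1]
    ring
  rw [intervalIntegral.integral_congr hlhs]
  rw [intervalIntegral.integral_neg, hcov, intervalIntegral.integral_symm]
  exact neg_neg _

end CoV

section Main1
variable {p y t T : ℝ} {g v : ℝ → ℝ}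
  (hp : 0 < p) (hy : 0 < y) (htT : t < T)
  (hgnonneg : ∀ z > (0:ℝ), 0 ≤ g z) (hgdec : AntitoneOn g (Set.Ioi 0))
  (hv1 : ∀ s ∈ Set.Icc t T, 1 ≤ v s)

include hp hv1 in
lemma phi_int_lb {s : ℝ} (hs : s ∈ Icc t T)
    (hI : IntegrableOn (fun s' => Real.exp (-(T - s') / p) * v s') (Ioc s T) volume) :
    p - p * Real.exp (-(T - s) / p) ≤ ∫ s' in s..T, Real.exp (-(T - s') / p) * v s' := by
  rw [← exp_prim p T hp s]
  apply intervalIntegral.integral_mono_on hs.2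
  · exact Continuous.intervalIntegrable (by continuity) _ _
  · exact (intervalIntegrable_iff_integrableOn_Ioc_of_le hs.2).2 hI
  · intro x hx
    have hx' : x ∈ Icc t T := ⟨le_trans hs.1 hx.1, hx.2⟩
    have h1 := hv1 x hx'
    have h2 : 0 < Real.exp (-(T - x) / p) := Real.exp_pos _
    nlinarith

-- integral of φ is nonnegative
include hp hv1 in
lemma phi_int_nonneg {s : ℝ} (hs : s ∈ Icc t T) :
    0 ≤ ∫ s' in s..T, Real.exp (-(T - s') / p) * v s' := by
  by_cases hI : IntervalIntegrable (fun s' => Real.exp (-(T - s') / p) * v s') volume s T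
  · apply intervalIntegral.integral_nonneg hs.2
    intro x hx
    have h1 := hv1 x ⟨le_trans hs.1 hx.1, hx.2⟩
    have h2 : 0 < Real.exp (-(T - x) / p) := Real.exp_pos _
    nlinarith
  · rw [intervalIntegral.integral_undef hI]

-- key pointwise estimate at good points
include hp hy htT hgnonneg hgdec hv1 in
lemma pointwise_good {s : ℝ} (hs : s ∈ Icc t T)
    (hI : IntegrableOn (fun s' => Real.exp (-(T - s') / p) * v s') (Ioc s T) volume) :
    Hb g y p (y + ∫ s' in s..T, Real.exp (-(T - s') / p) * v s')
        * (Real.exp (-(T - s) / p) * v s)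
      ≤ g (traj p y T v s / v s) * Real.exp (-(T - s) / p) * v s := by
  set U : ℝ := y + ∫ s' in s..T, Real.exp (-(T - s') / p) * v s' with hU
  set E : ℝ := Real.exp (-(T - s) / p) with hE
  set V : ℝ := v s with hV
  clear_value U E V
  have hEpos : 0 < E := by rw [hE]; exact Real.exp_pos _
  have hV1 : 1 ≤ V := by rw [hV]; exact hv1 s hs
  have hUy : y ≤ U := by
    have h0 := phi_int_nonneg hp hv1 hs (v := v); rw [hU]; linarith [h0]
  have hEe : E * Real.exp ((T - s) / p) = 1 := by
    rw [hE, ← Real.exp_add, (by ring : -(T - s) / p + (T - s) / p = 0), Real.exp_zero]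
  have htraj : traj p y T v s = Real.exp ((T - s) / p) * U := by
    rw [traj_eq p y T hp v s, hU]
  have htrajpos : 0 < traj p y T v s := by
    rw [htraj]
    have h9 := Real.exp_pos ((T - s) / p)
    nlinarith
  have hzpos : 0 < traj p y T v s / V := div_pos htrajpos (by linarith)
  by_cases hcase : U < y + p
  · -- main case
    have hkey : y + p - U ≤ p * E * V := by
      have h1 := phi_int_lb hp hv1 hs hI
      have h2 : p * E * 1 ≤ p * E * V := by
        nlinarith [mul_nonneg (mul_nonneg hp.le hEpos.le) (sub_nonneg.2 hV1)]
      have h3 : U ≥ y + (p - p * E) := by rw [hU, hE]; linarith [h1]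
      nlinarith
    have hHb : Hb g y p U = g (p * U / (y + p - U)) := by
      unfold Hb
      rw [if_pos hcase, max_eq_left hUy]
    have hargpos : 0 < p * U / (y + p - U) := by
      apply div_pos (by nlinarith) (by linarith)
    have hratio : traj p y T v s / V ≤ p * U / (y + p - U) := by
      rw [htraj, div_le_div_iff₀ (by linarith) (by linarith)]
      -- e^θ U (y+p−U) ≤ pU V  ⟸ e^θ(y+p−U) ≤ pV ⟸ (y+p−U) ≤ pVE
      have hExp : Real.exp ((T - s) / p) * E = 1 := by rw [mul_comm]; exact hEe
      have hU0 : 0 < U := by linarith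
      have h5 : Real.exp ((T - s) / p) * (y + p - U) ≤ p * V := by
        have h6 := mul_le_mul_of_nonneg_left hkey (le_of_lt (Real.exp_pos ((T - s) / p)))
        calc Real.exp ((T - s) / p) * (y + p - U) ≤ Real.exp ((T - s) / p) * (p * E * V) := h6
          _ = (Real.exp ((T - s) / p) * E) * (p * V) := by ring
          _ = p * V := by rw [hExp, one_mul]
      nlinarith [mul_le_mul_of_nonneg_left h5 hU0.le]
    have hgle := hgdec hzpos hargpos hratio
    rw [hHb]
    have hstep : g (p * U / (y + p - U)) * (E * V) ≤ g (traj p y T v s / V) * (E * V) := by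
      nlinarith [mul_nonneg (sub_nonneg.2 hgle) (mul_nonneg hEpos.le (by linarith : (0:ℝ) ≤ V))]
    calc g (p * U / (y + p - U)) * (E * V) ≤ g (traj p y T v s / V) * (E * V) := hstep
      _ = g (traj p y T v s / V) * E * V := by ring
  · -- U ≥ y + p : Hb U = 0
    have hHb : Hb g y p U = 0 := by unfold Hb; rw [if_neg hcase]
    rw [hHb, zero_mul]
    have h8 := hgnonneg _ hzpos
    exact mul_nonneg (mul_nonneg h8 hEpos.le) (by linarith)

-- pointwise estimate at junk points
include hp hy htT hgnonneg hgdec hv1 in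
lemma pointwise_junk {s : ℝ} (hs : s ∈ Icc t T)
    (hjunk : traj p y T v s = Real.exp ((T - s) / p) * y) :
    Real.exp (-(T - t) / p) * g y * (v s - Real.exp ((T - t) / p))
      ≤ g (traj p y T v s / v s) * Real.exp (-(T - s) / p) * v s := by
  set V : ℝ := v s with hV
  clear_value V
  have hV1 : 1 ≤ V := by rw [hV]; exact hv1 s hs
  set K : ℝ := Real.exp ((T - t) / p) with hK
  set c : ℝ := Real.exp (-(T - t) / p) with hc
  have hcpos : 0 < c := Real.exp_pos _
  have hKpos : 0 < K := Real.exp_pos _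
  have hEc : c ≤ Real.exp (-(T - s) / p) := by
    rw [hc]
    apply Real.exp_le_exp.2
    have h1 : -(T - t) ≤ -(T - s) := by linarith [hs.1]
    gcongr
  have hgy0 : 0 ≤ g y := hgnonneg y hy
  have htrajpos : 0 < traj p y T v s := by
    rw [hjunk]; positivity
  have hzpos : 0 < traj p y T v s / V := div_pos htrajpos (by linarith)
  have hRnonneg : 0 ≤ g (traj p y T v s / V) * Real.exp (-(T - s) / p) * V := by
    have h7 := hgnonneg _ hzpos
    have h2 : (0:ℝ) < Real.exp (-(T - s) / p) := Real.exp_pos _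
    exact mul_nonneg (mul_nonneg h7 h2.le) (by linarith)
  by_cases hcase : V ≤ K
  · have h6 : c * g y * (V - K) ≤ 0 := by
      nlinarith [mul_nonneg (mul_nonneg hcpos.le hgy0) (sub_nonneg.2 hcase)]
    linarith
  · push_neg at hcase
    have heK : Real.exp ((T - s) / p) ≤ K := by
      rw [hK]
      apply Real.exp_le_exp.2
      have h1 : T - s ≤ T - t := by linarith [hs.1]
      gcongr
    have hzley : traj p y T v s / V ≤ y := by
      rw [hjunk, div_le_iff₀ (by linarith)]
      nlinarith [mul_le_mul_of_nonneg_left (le_trans heK hcase.le) hy.le]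
    have hgz : g y ≤ g (traj p y T v s / V) := hgdec hzpos (mem_Ioi.2 hy) hzley
    calc c * g y * (V - K) ≤ c * g y * V := by
          nlinarith [mul_nonneg (mul_nonneg hcpos.le hgy0) hKpos.le]
      _ ≤ Real.exp (-(T - s) / p) * g y * V := by
          nlinarith [mul_nonneg (sub_nonneg.2 hEc) (mul_nonneg hgy0 (by linarith : (0:ℝ) ≤ V))]
      _ ≤ g (traj p y T v s / V) * Real.exp (-(T - s) / p) * V := by
          nlinarith [mul_nonneg (sub_nonneg.2 hgz)
            (mul_nonneg (Real.exp_pos (-(T - s) / p)).le (by linarith : (0:ℝ) ≤ V))]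
end Main1

section BranchA
variable {p y t T : ℝ} {g v : ℝ → ℝ}
  (hp : 0 < p) (hy : 0 < y) (htT : t < T)
  (hgnonneg : ∀ z > (0:ℝ), 0 ≤ g z) (hgdec : AntitoneOn g (Set.Ioi 0))
  (hv : Measurable v) (hv1 : ∀ s ∈ Set.Icc t T, 1 ≤ v s)

include hp hy htT hgnonneg hgdec hv hv1 in
lemma branch_a {s₀ : ℝ} (hs₀ : s₀ ∈ Ico t T)
    (hI : IntegrableOn (fun s' => Real.exp (-(T - s') / p) * v s') (Ioc s₀ T) volume)
    (hU : y + p - p * Real.exp (-(T - t) / p)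
        ≤ y + ∫ s' in s₀..T, Real.exp (-(T - s') / p) * v s') :
    ENNReal.ofReal (∫ σ in y..(y + p - p * Real.exp (-(T - t) / p)), Hb g y p σ)
      ≤ ∫⁻ s in Set.Ioc t T,
          ENNReal.ofReal (g (traj p y T v s / v s) * Real.exp (-(T - s) / p) * v s) := by
  set φ : ℝ → ℝ := fun s' => Real.exp (-(T - s') / p) * v s' with hφ
  set Up : ℝ := y + p - p * Real.exp (-(T - t) / p) with hUpdef
  obtain ⟨hts₀, hs₀T⟩ := hs₀
  have hHbanti := Hb_antitone hp hy hgnonneg hgdec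
  have hHbmeas : Measurable (Hb g y p) := hHbanti.measurable
  have hφmeas : Measurable φ := by
    apply Measurable.mul ?_ hv
    exact (Real.measurable_exp.comp ((measurable_const.sub measurable_id).neg.div_const p))
  have hφnonneg : ∀ x ∈ Icc t T, 0 ≤ φ x := by
    intro x hx
    have := hv1 x hx
    have h2 := Real.exp_pos (-(T - x) / p)
    rw [hφ]; dsimp only; nlinarith
  have hyUp : y < Up := by
    have h1 : Real.exp (-(T - t) / p) < 1 := by
      apply Real.exp_lt_one_iff.2 -- check name
      have : 0 < T - t := by linarith
      have h2 : -(T - t) < 0 := by linarith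
      exact div_neg_of_neg_of_pos h2 hp
    rw [hUpdef]; nlinarith
  -- clamped u
  set uc : ℝ → ℝ := fun s => y + ∫ s' in (min (max s s₀) T)..T, φ s' with hucdef
  have hIcc : IntegrableOn φ (Icc s₀ T) volume := by
    rw [integrableOn_Icc_iff_integrableOn_Ioc]; exact hI
  have hPcont : ContinuousOn (fun x => ∫ s' in x..T, φ s') (Icc s₀ T) := by
    have := intervalIntegral.continuousOn_primitive_interval_left (μ := volume) (f := φ)
      (a := s₀) (b := T) (by rwa [uIcc_of_le hs₀T.le])
    rwa [uIcc_of_le hs₀T.le] at this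
  have hclamp_mem : ∀ x : ℝ, min (max x s₀) T ∈ Icc s₀ T := by
    intro x
    exact ⟨le_min (le_max_right x s₀) hs₀T.le, min_le_right _ _⟩
  have huc_cont : Continuous uc := by
    apply continuous_const.add
    apply hPcont.comp_continuous
    · exact (continuous_id.max continuous_const).min continuous_const
    · exact hclamp_mem
  have huc_eq : ∀ s ∈ Icc s₀ T, uc s = y + ∫ s' in s..T, φ s' := by
    intro s hsmem
    rw [hucdef]
    dsimp only
    rw [max_eq_left hsmem.1, min_eq_left hsmem.2]
  have hucT : uc T = y := by
    have := huc_eq T ⟨hs₀T.le, le_rfl⟩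
    rw [this, intervalIntegral.integral_same, add_zero]
  have hmass : ∀ a ∈ Icc s₀ T,
      ∫⁻ s' in Ioc a T, ENNReal.ofReal (φ s') = ENNReal.ofReal (uc a - y) := by
    intro a ha
    have hInt : IntegrableOn φ (Ioc a T) volume := hI.mono_set (Ioc_subset_Ioc_left ha.1)
    have hnn : 0 ≤ᵐ[volume.restrict (Ioc a T)] φ := by
      filter_upwards [ae_restrict_mem measurableSet_Ioc] with x hx
      exact hφnonneg x ⟨le_trans (le_trans hts₀ ha.1) hx.1.le, hx.2⟩
    rw [← ofReal_integral_eq_lintegral_ofReal hInt hnn]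
    congr 1
    rw [huc_eq a ha, add_sub_cancel_left, intervalIntegral.integral_of_le ha.2]
  have hUp_le : Up ≤ uc s₀ := by
    rw [huc_eq s₀ ⟨le_rfl, hs₀T.le⟩]; exact hU
  set μφ : Measure ℝ :=
    (volume.restrict (Ioc s₀ T)).withDensity (fun s => ENNReal.ofReal (φ s)) with hμφ
  have hHbucmeas : Measurable fun s => Hb g y p (uc s) := hHbmeas.comp huc_cont.measurable
  -- level set comparison
  have hlevel : ∀ lam : ℝ, 0 < lam →
      (volume.restrict (Ioc y Up)) {σ | lam < Hb g y p σ}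
        ≤ μφ {s | lam < Hb g y p (uc s)} := by
    intro lam hlam
    rw [Measure.restrict_apply (measurableSet_lt measurable_const hHbmeas)]
    set A : Set ℝ := {σ | lam < Hb g y p σ} ∩ Ioc y Up with hA
    rcases A.eq_empty_or_nonempty with hAe | hAne
    · rw [hAe]; simp
    · have hbdd : BddAbove A := bddAbove_Ioc.mono inter_subset_right
      set ρ := sSup A with hρ
      have hsub : A ⊆ Ioc y ρ := fun σ hσ => ⟨hσ.2.1, le_csSup hbdd hσ⟩
      obtain ⟨w, hwmono, hwtend, hwmem⟩ := exists_seq_tendsto_sSup hAne hbdd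
      have key : ∀ n, ENNReal.ofReal (w n - y) ≤ μφ {s | lam < Hb g y p (uc s)} := by
        intro n
        obtain ⟨hwA, hwy, hwUp⟩ : lam < Hb g y p (w n) ∧ y < w n ∧ w n ≤ Up := by
          have h := hwmem n; exact ⟨h.1, h.2.1, h.2.2⟩
        set B : Set ℝ := Icc s₀ T ∩ {s | w n ≤ uc s} with hB
        have hBclosed : IsClosed B := isClosed_Icc.inter (isClosed_le continuous_const huc_cont)
        have hBne : B.Nonempty := ⟨s₀, ⟨le_rfl, hs₀T.le⟩, le_trans hwUp hUp_le⟩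
        have hBbdd : BddAbove B := bddAbove_Icc.mono inter_subset_left
        set sστ := sSup B with hsστ
        have hsB : sστ ∈ B := hBclosed.csSup_mem hBne hBbdd
        have hsT : sστ < T := by
          rcases lt_or_eq_of_le hsB.1.2 with h | h
          · exact h
          · exfalso
            have : w n ≤ uc T := by rw [← h]; exact hsB.2
            rw [hucT] at this; linarith
        have hsubset : Ioc sστ T ⊆ {s | lam < Hb g y p (uc s)} := by
          intro x hx
          have hxIcc : x ∈ Icc s₀ T := ⟨le_trans hsB.1.1 hx.1.le, hx.2⟩
          have hxB : x ∉ B := fun hxB => absurd (le_csSup hBbdd hxB) (not_le.2 hx.1)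
          have hux : uc x < w n := lt_of_not_ge (fun h => hxB ⟨hxIcc, h⟩)
          have := hHbanti hux.le
          exact lt_of_lt_of_le hwA this
        calc ENNReal.ofReal (w n - y) ≤ ENNReal.ofReal (uc sστ - y) := by
              apply ENNReal.ofReal_le_ofReal
              have h5 : w n ≤ uc sστ := hsB.2
              linarith
          _ = ∫⁻ s' in Ioc sστ T, ENNReal.ofReal (φ s') := (hmass sστ hsB.1).symm
          _ = μφ (Ioc sστ T) := by
              rw [hμφ, withDensity_apply _ measurableSet_Ioc,
                Measure.restrict_restrict measurableSet_Ioc,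
                inter_eq_self_of_subset_left (Ioc_subset_Ioc_left hsB.1.1)]
          _ ≤ μφ {s | lam < Hb g y p (uc s)} := measure_mono hsubset
      have htendsto : Tendsto (fun n => ENNReal.ofReal (w n - y)) atTop
          (nhds (ENNReal.ofReal (ρ - y))) := by
        apply (ENNReal.continuous_ofReal.tendsto _).comp
        exact hwtend.sub_const y
      calc volume A ≤ volume (Ioc y ρ) := measure_mono hsub
        _ = ENNReal.ofReal (ρ - y) := Real.volume_Ioc
        _ ≤ μφ {s | lam < Hb g y p (uc s)} := le_of_tendsto' htendsto key
  -- Hb integrable on Ioc y Up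
  have hHbint : IntegrableOn (Hb g y p) (Ioc y Up) volume := by
    apply Integrable.mono' (g := fun _ => g y)
    · exact integrableOn_const measure_Ioc_lt_top.ne
    · exact hHbmeas.aestronglyMeasurable
    · apply ae_of_all
      intro σ
      rw [Real.norm_eq_abs, abs_of_nonneg (Hb_nonneg hp hy hgnonneg σ)]
      exact Hb_le_gy hp hy hgnonneg hgdec σ
  have hHbnn : 0 ≤ᵐ[volume.restrict (Ioc y Up)] Hb g y p :=
    ae_of_all _ (Hb_nonneg hp hy hgnonneg)
  have hucnn : 0 ≤ᵐ[μφ] fun s => Hb g y p (uc s) :=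
    ae_of_all _ (fun s => Hb_nonneg hp hy hgnonneg _)
  calc ENNReal.ofReal (∫ σ in y..Up, Hb g y p σ)
      = ∫⁻ σ in Ioc y Up, ENNReal.ofReal (Hb g y p σ) := by
        rw [intervalIntegral.integral_of_le hyUp.le,
          ofReal_integral_eq_lintegral_ofReal hHbint hHbnn]
    _ = ∫⁻ lam in Ioi (0:ℝ), (volume.restrict (Ioc y Up)) {σ | lam < Hb g y p σ} :=
        lintegral_eq_lintegral_meas_lt _ hHbnn hHbmeas.aemeasurable
    _ ≤ ∫⁻ lam in Ioi (0:ℝ), μφ {s | lam < Hb g y p (uc s)} := by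
        apply lintegral_mono_ae
        filter_upwards [ae_restrict_mem measurableSet_Ioi] with lam hlam
        exact hlevel lam hlam
    _ = ∫⁻ s, ENNReal.ofReal (Hb g y p (uc s)) ∂μφ :=
        (lintegral_eq_lintegral_meas_lt μφ hucnn hHbucmeas.aemeasurable).symm
    _ = ∫⁻ s in Ioc s₀ T,
          ENNReal.ofReal (φ s) * ENNReal.ofReal (Hb g y p (uc s)) := by
        rw [hμφ]
        rw [lintegral_withDensity_eq_lintegral_mul _ (hφmeas.ennreal_ofReal)
          (hHbucmeas.ennreal_ofReal)]
        rfl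
    _ = ∫⁻ s in Ioc s₀ T, ENNReal.ofReal (Hb g y p (uc s) * φ s) := by
        apply lintegral_congr
        intro s
        rw [ENNReal.ofReal_mul (Hb_nonneg hp hy hgnonneg _), mul_comm]
    _ ≤ ∫⁻ s in Ioc s₀ T,
          ENNReal.ofReal (g (traj p y T v s / v s) * Real.exp (-(T - s) / p) * v s) := by
        apply lintegral_mono_ae
        filter_upwards [ae_restrict_mem measurableSet_Ioc] with s hsmem
        apply ENNReal.ofReal_le_ofReal
        have hsIcc : s ∈ Icc t T := ⟨le_trans hts₀ hsmem.1.le, hsmem.2⟩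
        have hsI : IntegrableOn φ (Ioc s T) volume :=
          hI.mono_set (Ioc_subset_Ioc_left hsmem.1.le)
        have hgood := pointwise_good hp hy htT hgnonneg hgdec hv1 hsIcc hsI
        have huc : uc s = y + ∫ s' in s..T, φ s' := huc_eq s ⟨hsmem.1.le, hsmem.2⟩
        rw [huc]
        exact hgood
    _ ≤ ∫⁻ s in Set.Ioc t T,
          ENNReal.ofReal (g (traj p y T v s / v s) * Real.exp (-(T - s) / p) * v s) :=
        lintegral_mono' (Measure.restrict_mono (Ioc_subset_Ioc_left hts₀) le_rfl) le_rfl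

end BranchA

section BranchB
variable {p y t T : ℝ} {g v : ℝ → ℝ}
  (hp : 0 < p) (hy : 0 < y) (htT : t < T)
  (hgnonneg : ∀ z > (0:ℝ), 0 ≤ g z) (hgdec : AntitoneOn g (Set.Ioi 0))
  (hv : Measurable v) (hv1 : ∀ s ∈ Set.Icc t T, 1 ≤ v s)

include hp htT hv hv1 in
lemma int_of_fin {S : Set ℝ} (hS : MeasurableSet S) (hSsub : S ⊆ Icc t T)
    (hfin : ∫⁻ s' in S, ENNReal.ofReal (Real.exp (-(T - s') / p) * v s') ≠ ⊤) :
    IntegrableOn (fun s' => Real.exp (-(T - s') / p) * v s') S volume := by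
  set φ : ℝ → ℝ := fun s' => Real.exp (-(T - s') / p) * v s' with hφ
  have hφmeas : Measurable φ :=
    (Real.measurable_exp.comp ((measurable_const.sub measurable_id).neg.div_const p)).mul hv
  have hnn : 0 ≤ᵐ[volume.restrict S] φ := by
    filter_upwards [ae_restrict_mem hS] with x hx
    have h1 := hv1 x (hSsub hx)
    have h2 := Real.exp_pos (-(T - x) / p)
    simp only [Pi.zero_apply, hφ]; nlinarith
  refine ⟨hφmeas.aestronglyMeasurable, ?_⟩
  rw [hasFiniteIntegral_iff_ofReal hnn]
  exact lt_top_iff_ne_top.2 hfin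

include hp hy htT hgnonneg hgdec hv hv1 in
lemma branch_b (hgy : 0 < g y)
    (hEx : ∀ s₀ ∈ Ico t T,
      IntegrableOn (fun s' => Real.exp (-(T - s') / p) * v s') (Ioc s₀ T) volume →
      y + ∫ s' in s₀..T, Real.exp (-(T - s') / p) * v s'
        < y + p - p * Real.exp (-(T - t) / p)) :
    ∫⁻ s in Set.Ioc t T,
        ENNReal.ofReal (g (traj p y T v s / v s) * Real.exp (-(T - s) / p) * v s) = ⊤ := by
  set φ : ℝ → ℝ := fun s' => Real.exp (-(T - s') / p) * v s' with hφ
  set Up : ℝ := y + p - p * Real.exp (-(T - t) / p) with hUpdef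
  have hφmeas : Measurable φ :=
    (Real.measurable_exp.comp ((measurable_const.sub measurable_id).neg.div_const p)).mul hv
  set ν : Measure ℝ := volume.withDensity (fun s => ENNReal.ofReal (φ s)) with hν
  have hνapp : ∀ S : Set ℝ, MeasurableSet S →
      ν S = ∫⁻ s' in S, ENNReal.ofReal (φ s') := by
    intro S hS
    rw [hν, withDensity_apply _ hS]
  -- the set of good points
  set S : Set ℝ := {s | s ∈ Icc t T ∧ IntegrableOn φ (Ioc s T) volume} with hS
  have hTS : T ∈ S := ⟨⟨htT.le, le_rfl⟩, by rw [Ioc_self]; exact integrableOn_empty⟩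
  have hSne : S.Nonempty := ⟨T, hTS⟩
  have hSbdd : BddBelow S := bddBelow_Icc.mono (fun x hx => hx.1)
  set σs : ℝ := sInf S with hσs
  have hσt : t ≤ σs := le_csInf hSne (fun b hb => hb.1.1)
  have hσT : σs ≤ T := csInf_le hSbdd hTS
  have hupward : ∀ s ∈ Icc t T, σs < s → IntegrableOn φ (Ioc s T) volume := by
    intro s hs hlt
    obtain ⟨b, hbS, hbl⟩ := exists_lt_of_csInf_lt hSne hlt
    exact hbS.2.mono_set (Ioc_subset_Ioc_left hbl.le)
  have hbound : ∀ s ∈ Ico t T, IntegrableOn φ (Ioc s T) volume →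
      ν (Ioc s T) ≤ ENNReal.ofReal (Up - y) := by
    intro s hs hint
    have hnn : 0 ≤ᵐ[volume.restrict (Ioc s T)] φ := by
      filter_upwards [ae_restrict_mem measurableSet_Ioc] with x hx
      have h1 := hv1 x ⟨le_trans hs.1 hx.1.le, hx.2⟩
      have h2 := Real.exp_pos (-(T - x) / p)
      simp only [Pi.zero_apply, hφ]; nlinarith
    rw [hνapp _ measurableSet_Ioc, ← ofReal_integral_eq_lintegral_ofReal hint hnn]
    apply ENNReal.ofReal_le_ofReal
    have := hEx s hs hint
    rw [← intervalIntegral.integral_of_le hs.2.le]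
    linarith
  -- mass above σs is finite
  have hνIoc : ν (Ioc σs T) ≤ ENNReal.ofReal (Up - y) := by
    rcases eq_or_lt_of_le hσT with heq | hlt
    · rw [heq, Ioc_self]; simp
    · set a : ℕ → ℝ := fun n => σs + (T - σs) / (n + 2) with ha
      have haσ : ∀ n, σs < a n := by
        intro n
        have : 0 < (T - σs) / ((n:ℝ) + 2) := div_pos (by linarith) (by positivity)
        rw [ha]; dsimp only; linarith
      have haT : ∀ n, a n < T := by
        intro n
        have h1 : (T - σs) / ((n:ℝ) + 2) < (T - σs) / 1 := by
          apply div_lt_div_of_pos_left (by linarith) (by norm_num)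
          have := Nat.cast_nonneg (α := ℝ) n
          linarith
        rw [ha]; dsimp only; linarith
      have hamono : Monotone (fun n => Ioc (a n) T) := by
        intro m n hmn
        apply Ioc_subset_Ioc_left
        rw [ha]; dsimp only
        have h2 : ((m:ℝ) + 2) ≤ ((n:ℝ) + 2) := by
          have := (Nat.cast_le (α := ℝ)).2 hmn; linarith
        have := div_le_div_of_nonneg_left (by linarith : (0:ℝ) ≤ T - σs)
          (by positivity : (0:ℝ) < (m:ℝ) + 2) h2
        linarith
      have hunion : ⋃ n, Ioc (a n) T = Ioc σs T := by
        apply Subset.antisymm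
        · apply iUnion_subset
          intro n
          exact Ioc_subset_Ioc_left (haσ n).le
        · intro x hx
          have hxσ : 0 < x - σs := by linarith [hx.1]
          obtain ⟨n, hn⟩ := exists_nat_one_div_lt (show (0:ℝ) < (x - σs) / (T - σs) by
            apply div_pos hxσ (by linarith))
          simp only [mem_iUnion]
          refine ⟨n, ?_, hx.2⟩
          rw [ha]; dsimp only
          have h3 : (T - σs) > 0 := by linarith
          have h5 := (div_lt_div_iff₀ (by positivity) h3).1 hn
          have h4 : (T - σs) / ((n:ℝ) + 2) < x - σs := by
            rw [div_lt_iff₀ (by positivity)]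
            nlinarith [h5, mul_nonneg hxσ.le (by positivity : (0:ℝ) ≤ (n:ℝ))]
          linarith
      rw [← hunion, (hamono.directed_le).measure_iUnion]
      apply iSup_le
      intro n
      exact hbound (a n) ⟨by linarith [haσ n], haT n⟩
        (hupward (a n) ⟨by linarith [haσ n], (haT n).le⟩ (haσ n))
  -- t < sigma
  have hνt : t < σs := by
    by_contra hcon
    push_neg at hcon
    have hsub : Ioc t T ⊆ Ioc σs T := Ioc_subset_Ioc_left hcon
    have hfin : ν (Ioc t T) ≤ ENNReal.ofReal (Up - y) := le_trans (measure_mono hsub) hνIoc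
    have hint : IntegrableOn φ (Ioc t T) volume := by
      apply int_of_fin hp htT hv hv1 measurableSet_Ioc Ioc_subset_Icc_self
      rw [← hνapp _ measurableSet_Ioc]
      exact ne_top_of_le_ne_top ENNReal.ofReal_ne_top hfin
    have hlb := phi_int_lb hp hv1 (s := t) ⟨le_rfl, htT.le⟩ hint
    have hcontr := hEx t ⟨le_rfl, htT⟩ hint
    rw [hUpdef] at hcontr
    have : intervalIntegral φ t T volume = ∫ s' in t..T, φ s' := rfl
    linarith [hlb]
  set s₂ : ℝ := (t + σs) / 2 with hs₂
  have hts₂ : t < s₂ := by rw [hs₂]; linarith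
  have hs₂σ : s₂ < σs := by rw [hs₂]; linarith
  have hs₂T : s₂ ≤ T := by linarith
  have hs₂notS : ¬ IntegrableOn φ (Ioc s₂ T) volume := by
    intro hint
    have hmem : s₂ ∈ S := ⟨⟨hts₂.le, hs₂T⟩, hint⟩
    have := csInf_le hSbdd hmem
    linarith
  have hνs₂T : ν (Ioc s₂ T) = ⊤ := by
    by_contra hcon
    apply hs₂notS
    apply int_of_fin hp htT hv hv1 measurableSet_Ioc
      (fun x hx => ⟨le_trans hts₂.le hx.1.le, hx.2⟩)
    rw [← hνapp _ measurableSet_Ioc]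
    exact hcon
  have hmid : ν (Ioc s₂ σs) = ⊤ := by
    by_contra hcon
    have hsplit : Ioc s₂ T ⊆ Ioc s₂ σs ∪ Ioc σs T := by
      rw [Ioc_union_Ioc_eq_Ioc hs₂σ.le hσT]
    have h3 : ν (Ioc s₂ T) ≤ ν (Ioc s₂ σs) + ν (Ioc σs T) :=
      le_trans (measure_mono hsplit) (measure_union_le _ _)
    rw [hνs₂T] at h3
    have h4 : ν (Ioc s₂ σs) + ν (Ioc σs T) < ⊤ :=
      ENNReal.add_lt_top.2 ⟨lt_top_iff_ne_top.2 hcon,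
        lt_of_le_of_lt hνIoc ENNReal.ofReal_lt_top⟩
    exact lt_irrefl ⊤ (lt_of_le_of_lt h3 h4)
  have hνIoo : ν (Ioo s₂ σs) = ⊤ := by
    rw [hνapp _ measurableSet_Ioo, setLIntegral_congr Ioo_ae_eq_Ioc,
      ← hνapp _ measurableSet_Ioc]
    exact hmid
  have hjunk : ∀ s ∈ Ioo s₂ σs, traj p y T v s = Real.exp ((T - s) / p) * y := by
    intro s hsm
    apply traj_junk p y T hp v s (by linarith [hsm.2])
    intro hint
    have hmem : s ∈ S := ⟨⟨by linarith [hsm.1], by linarith [hsm.2]⟩, hint⟩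
    have := csInf_le hSbdd hmem
    linarith [hsm.2]
  set c : ℝ := Real.exp (-(T - t) / p) with hc
  set K : ℝ := Real.exp ((T - t) / p) with hK
  have hcgy : (0:ℝ) < c * g y := by
    have := Real.exp_pos (-(T - t) / p)
    rw [hc]; nlinarith
  have hinfvK : ∫⁻ s in Ioo s₂ σs, ENNReal.ofReal (v s - K) = ⊤ := by
    by_contra hcon
    have hptw : ∀ s ∈ Ioo s₂ σs,
        ENNReal.ofReal (φ s) ≤ ENNReal.ofReal (v s - K) + ENNReal.ofReal K := by
      intro s hsm
      have h1 := hv1 s ⟨by linarith [hsm.1], by linarith [hsm.2]⟩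
      have h2 : Real.exp (-(T - s) / p) ≤ 1 := by
        rw [← Real.exp_zero]
        apply Real.exp_le_exp.2
        apply div_nonpos_of_nonpos_of_nonneg (by linarith [hsm.2] : -(T - s) ≤ 0) hp.le
      calc ENNReal.ofReal (φ s) ≤ ENNReal.ofReal (v s) := by
            apply ENNReal.ofReal_le_ofReal
            rw [hφ]; dsimp only; nlinarith
        _ = ENNReal.ofReal (v s - K + K) := by rw [sub_add_cancel]
        _ ≤ _ := ENNReal.ofReal_add_le
    have h5 : ∫⁻ s in Ioo s₂ σs, ENNReal.ofReal (φ s)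
        ≤ (∫⁻ s in Ioo s₂ σs, ENNReal.ofReal (v s - K)) +
            ENNReal.ofReal K * volume (Ioo s₂ σs) := by
      rw [← setLIntegral_const, ← lintegral_add_right _ measurable_const]
      apply lintegral_mono_ae
      filter_upwards [ae_restrict_mem measurableSet_Ioo] with s hsm
      exact hptw s hsm
    have h6 : (∫⁻ s in Ioo s₂ σs, ENNReal.ofReal (v s - K)) +
        ENNReal.ofReal K * volume (Ioo s₂ σs) < ⊤ := by
      apply ENNReal.add_lt_top.2
      constructor
      · exact lt_top_iff_ne_top.2 hcon
      · exact ENNReal.mul_lt_top ENNReal.ofReal_lt_top (by rw [Real.volume_Ioo]; exact ENNReal.ofReal_lt_top)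
    rw [← hνapp _ measurableSet_Ioo] at h5
    rw [hνIoo] at h5
    exact lt_irrefl ⊤ (lt_of_le_of_lt h5 h6)
  apply top_unique
  calc (⊤:ENNReal) = ENNReal.ofReal (c * g y) * ∫⁻ s in Ioo s₂ σs, ENNReal.ofReal (v s - K) := by
        rw [hinfvK, ENNReal.mul_top (ne_of_gt (ENNReal.ofReal_pos.2 hcgy))]
    _ = ∫⁻ s in Ioo s₂ σs, ENNReal.ofReal (c * g y) * ENNReal.ofReal (v s - K) :=
        (lintegral_const_mul _ ((hv.sub measurable_const).ennreal_ofReal)).symm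
    _ = ∫⁻ s in Ioo s₂ σs, ENNReal.ofReal (c * g y * (v s - K)) := by
        apply lintegral_congr
        intro s
        rw [ENNReal.ofReal_mul hcgy.le]
    _ ≤ ∫⁻ s in Ioo s₂ σs,
          ENNReal.ofReal (g (traj p y T v s / v s) * Real.exp (-(T - s) / p) * v s) := by
        apply lintegral_mono_ae
        filter_upwards [ae_restrict_mem measurableSet_Ioo] with s hsm
        apply ENNReal.ofReal_le_ofReal
        exact pointwise_junk hp hy htT hgnonneg hgdec hv1
          ⟨by linarith [hsm.1], by linarith [hsm.2]⟩ (hjunk s hsm)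
    _ ≤ ∫⁻ s in Set.Ioc t T,
          ENNReal.ofReal (g (traj p y T v s / v s) * Real.exp (-(T - s) / p) * v s) :=
        lintegral_mono' (Measure.restrict_mono (by
          intro x hx
          rw [mem_Ioo] at hx
          rw [mem_Ioc]
          exact ⟨by linarith [hx.1], by linarith [hx.2]⟩) le_rfl) le_rfl

end BranchB

/-- consequence of Proposition 7.4: v ≡ 1 minimizes the cost
∫_t^T g(x(s)/v(s)) e^{−(T−s)/p} v(s) ds among all controls v ≥ 1. -/
theorem stmt_18 (p y t T : ℝ) (hp : 0 < p) (hy : 0 < y) (htT : t < T)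
    (g : ℝ → ℝ)
    (hg1 : ContDiffOn ℝ 1 g (Set.Ioi 0))
    (hgnonneg : ∀ z > (0:ℝ), 0 ≤ g z)
    (hgdec : AntitoneOn g (Set.Ioi 0))
    (hzg : AntitoneOn (fun z => -(z * deriv g z)) (Set.Ioi 0))
    (hg2 : ContDiffOn ℝ 2 g {z : ℝ | 0 < z ∧ deriv g z < 0}) :
    ∀ v : ℝ → ℝ, Measurable v → (∀ s ∈ Set.Icc t T, 1 ≤ v s) →
      ENNReal.ofReal (∫ s in t..T, g (xpTraj p y T s) * Real.exp (-(T - s) / p))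
        ≤ ∫⁻ s in Set.Ioc t T,
            ENNReal.ofReal (g (traj p y T v s / v s) * Real.exp (-(T - s) / p) * v s) := by
  intro v hv hv1
  by_cases hgy : g y ≤ 0
  · have hzero : EqOn (fun s => g (xpTraj p y T s) * Real.exp (-(T - s) / p))
        (fun _ => (0:ℝ)) (uIcc t T) := by
      intro s hs
      rw [uIcc_of_le htT.le] at hs
      have hxp : y ≤ xpTraj p y T s := by
        unfold xpTraj
        have h1 : 1 ≤ Real.exp ((T - s) / p) := by
          rw [← Real.exp_zero]
          apply Real.exp_le_exp.2
          apply div_nonneg (by linarith [hs.2]) hp.le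
        nlinarith
      have hxppos : 0 < xpTraj p y T s := lt_of_lt_of_le hy hxp
      have h2 : g (xpTraj p y T s) ≤ g y := hgdec (mem_Ioi.2 hy) (mem_Ioi.2 hxppos) hxp
      have h3 : 0 ≤ g (xpTraj p y T s) := hgnonneg _ hxppos
      have h4 : g (xpTraj p y T s) = 0 := le_antisymm (by linarith) h3
      simp only [h4, zero_mul]
    rw [intervalIntegral.integral_congr hzero, intervalIntegral.integral_zero,
      ENNReal.ofReal_zero]
    exact zero_le
  · push_neg at hgy
    rw [cov_reference hp hy htT hg1]
    by_cases hEx : ∃ s₀, s₀ ∈ Ico t T ∧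
        IntegrableOn (fun s' => Real.exp (-(T - s') / p) * v s') (Ioc s₀ T) volume ∧
        y + p - p * Real.exp (-(T - t) / p)
          ≤ y + ∫ s' in s₀..T, Real.exp (-(T - s') / p) * v s'
    · obtain ⟨s₀, hs₀, hI, hU⟩ := hEx
      exact branch_a hp hy htT hgnonneg hgdec hv hv1 hs₀ hI hU
    · push_neg at hEx
      rw [branch_b hp hy htT hgnonneg hgdec hv hv1 hgy hEx]
      exact le_top
end
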